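/- arXiv:0704.2644 — 5 statements merged into one kernel-verified Lean document; each statement's English description precedes it below -/
import Mathlib

section
/- Let n ≥ 1 and let μ be a probability measure on a product of measurable spaces 𝒳₁ × ⋯ × 𝒳ₙ. For 1 ≤ j ≤ n let μ_j denote the marginal of μ on 𝒳_j and let μ^{(j)} denote the marginal of μ on 𝒳₁ × ⋯ × 𝒳_j. Suppose there is β ≥ 0 such that for every j ∈ {2, …, n}, d(μ^{(j)}, μ^{(j−1)} ⊗ μ_j) ≤ β. Then d(μ, μ₁ ⊗ μ₂ ⊗ ⋯ ⊗ μₙ) ≤ (n − 1)β. -/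
open MeasureTheory
open scoped ENNReal

/-- The variational distance `d(P,Q) = 2 sup_A |P(A) - Q(A)|` between two measures. -/
noncomputable def tvDist {Z : Type*} [MeasurableSpace Z] (P Q : Measure Z) : ℝ :=
  2 * ⨆ A : {A : Set Z // MeasurableSet A}, |(P A.1).toReal - (Q A.1).toReal|

/-- Projection of the full product onto the first `j` coordinates. -/
def prefixProj (X : ℕ → Type*) {j n : ℕ} (h : j ≤ n) (x : ∀ i : Fin n, X i) (i : Fin j) :
    X i := x (Fin.castLE h i)

section Aux

variable {Z W : Type*} [MeasurableSpace Z] [MeasurableSpace W]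

noncomputable def tvS (P Q : Measure Z) : ℝ :=
  ⨆ A : {A : Set Z // MeasurableSet A}, |(P A.1).toReal - (Q A.1).toReal|

lemma tvDist_eq (P Q : Measure Z) : tvDist P Q = 2 * tvS P Q := rfl

instance : Nonempty {A : Set Z // MeasurableSet A} := ⟨⟨∅, MeasurableSet.empty⟩⟩

lemma tvS_bdd (P Q : Measure Z) [IsProbabilityMeasure P] [IsProbabilityMeasure Q] :
    BddAbove (Set.range fun A : {A : Set Z // MeasurableSet A} =>
      |(P A.1).toReal - (Q A.1).toReal|) := by
  refine ⟨1, ?_⟩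
  rintro _ ⟨A, rfl⟩
  have h1 : (P A.1).toReal ≤ 1 := by
    simpa using ENNReal.toReal_mono ENNReal.one_ne_top (prob_le_one (μ := P) (s := A.1))
  have h2 : (Q A.1).toReal ≤ 1 := by
    simpa using ENNReal.toReal_mono ENNReal.one_ne_top (prob_le_one (μ := Q) (s := A.1))
  have h3 : 0 ≤ (P A.1).toReal := ENNReal.toReal_nonneg
  have h4 : 0 ≤ (Q A.1).toReal := ENNReal.toReal_nonneg
  rw [abs_sub_le_iff]; constructor <;> linarith

lemma tvS_self (P : Measure Z) : tvS P P = 0 := by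
  simp [tvS, ciSup_const]

lemma tvS_triangle (P Q R : Measure Z) [IsProbabilityMeasure P] [IsProbabilityMeasure Q]
    [IsProbabilityMeasure R] : tvS P R ≤ tvS P Q + tvS Q R := by
  refine ciSup_le fun A => ?_
  exact (abs_sub_le _ _ _).trans
    (add_le_add (le_ciSup (tvS_bdd P Q) A) (le_ciSup (tvS_bdd Q R) A))

lemma tvS_map (P Q : Measure Z) [IsProbabilityMeasure P] [IsProbabilityMeasure Q]
    {f : Z → W} (hf : Measurable f) : tvS (P.map f) (Q.map f) ≤ tvS P Q := by
  refine ciSup_le fun A => ?_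
  rw [Measure.map_apply hf A.2, Measure.map_apply hf A.2]
  exact le_ciSup (tvS_bdd P Q) ⟨f ⁻¹' A.1, hf A.2⟩

lemma tvS_prod (P Q : Measure Z) (m : Measure W) [IsProbabilityMeasure P]
    [IsProbabilityMeasure Q] [IsProbabilityMeasure m] :
    tvS (P.prod m) (Q.prod m) ≤ tvS P Q := by
  obtain ⟨S, hS, hPS, hQS⟩ := hahn_decomposition (μ := P) (ν := Q)
  have hres1 : Q.restrict S ≤ P.restrict S := by
    refine Measure.le_iff.2 fun t ht => ?_
    rw [Measure.restrict_apply ht, Measure.restrict_apply ht]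
    exact hPS _ (ht.inter hS) Set.inter_subset_right
  have hres2 : P.restrict Sᶜ ≤ Q.restrict Sᶜ := by
    refine Measure.le_iff.2 fun t ht => ?_
    rw [Measure.restrict_apply ht, Measure.restrict_apply ht]
    exact hQS _ (ht.inter hS.compl) Set.inter_subset_right
  have main : ∀ (P' Q' : Measure Z), IsProbabilityMeasure P' → IsProbabilityMeasure Q' →
      ∀ (T : Set Z), MeasurableSet T → Q'.restrict T ≤ P'.restrict T →
      P'.restrict Tᶜ ≤ Q'.restrict Tᶜ → ∀ A : Set (Z × W), MeasurableSet A →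
      (P'.prod m) A ≤ (Q'.prod m) A + (P' T - Q' T) := by
    intro P' Q' hP' hQ' T hT h1 h2 A hA
    haveI := hP'; haveI := hQ'
    rw [Measure.prod_apply hA, Measure.prod_apply hA]
    set f : Z → ℝ≥0∞ := fun x => m (Prod.mk x ⁻¹' A) with hf
    have hf1 : ∀ x, f x ≤ 1 := fun x => prob_le_one
    have step1 : ∫⁻ x in T, f x ∂P' ≤ ∫⁻ x in T, f x ∂Q' + (P' T - Q' T) := by
      have hD : P'.restrict T - Q'.restrict T + Q'.restrict T = P'.restrict T :=
        Measure.sub_add_cancel_of_le h1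
      calc ∫⁻ x in T, f x ∂P'
          = ∫⁻ x, f x ∂(P'.restrict T - Q'.restrict T + Q'.restrict T) := by rw [hD]
        _ = ∫⁻ x, f x ∂(P'.restrict T - Q'.restrict T) + ∫⁻ x in T, f x ∂Q' :=
            lintegral_add_measure _ _ _
        _ ≤ (P'.restrict T - Q'.restrict T) Set.univ + ∫⁻ x in T, f x ∂Q' :=
            add_le_add ((lintegral_mono hf1).trans_eq lintegral_one) le_rfl
        _ = (P' T - Q' T) + ∫⁻ x in T, f x ∂Q' := by
            rw [Measure.sub_apply MeasurableSet.univ h1, Measure.restrict_apply_univ,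
              Measure.restrict_apply_univ]
        _ = ∫⁻ x in T, f x ∂Q' + (P' T - Q' T) := add_comm _ _
    calc ∫⁻ x, f x ∂P'
        = ∫⁻ x in T, f x ∂P' + ∫⁻ x in Tᶜ, f x ∂P' := (lintegral_add_compl f hT).symm
      _ ≤ (∫⁻ x in T, f x ∂Q' + (P' T - Q' T)) + ∫⁻ x in Tᶜ, f x ∂Q' :=
          add_le_add step1 (lintegral_mono' h2 le_rfl)
      _ = (∫⁻ x in T, f x ∂Q' + ∫⁻ x in Tᶜ, f x ∂Q') + (P' T - Q' T) := by
          rw [add_right_comm]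
      _ = ∫⁻ x, f x ∂Q' + (P' T - Q' T) := by rw [lintegral_add_compl f hT]
  refine ciSup_le fun A => ?_
  have k1 := main P Q inferInstance inferInstance S hS hres1 hres2 A.1 A.2
  have k2 := main Q P inferInstance inferInstance Sᶜ hS.compl hres2
    (by rwa [compl_compl]) A.1 A.2
  have hQSle : Q S ≤ P S := hPS S hS (subset_refl S)
  have hPScle : P Sᶜ ≤ Q Sᶜ := hQS Sᶜ hS.compl (subset_refl _)
  have hne1 : P S - Q S ≠ ∞ := ne_top_of_le_ne_top (measure_ne_top _ _) tsub_le_self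
  have hne2 : Q Sᶜ - P Sᶜ ≠ ∞ := ne_top_of_le_ne_top (measure_ne_top _ _) tsub_le_self
  have t1 : ((P.prod m) A.1).toReal ≤
      ((Q.prod m) A.1).toReal + ((P S).toReal - (Q S).toReal) := by
    have := ENNReal.toReal_mono (ENNReal.add_ne_top.2 ⟨measure_ne_top _ _, hne1⟩) k1
    rwa [ENNReal.toReal_add (measure_ne_top _ _) hne1,
      ENNReal.toReal_sub_of_le hQSle (measure_ne_top _ _)] at this
  have t2 : ((Q.prod m) A.1).toReal ≤
      ((P.prod m) A.1).toReal + ((Q Sᶜ).toReal - (P Sᶜ).toReal) := by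
    have := ENNReal.toReal_mono (ENNReal.add_ne_top.2 ⟨measure_ne_top _ _, hne2⟩) k2
    rwa [ENNReal.toReal_add (measure_ne_top _ _) hne2,
      ENNReal.toReal_sub_of_le hPScle (measure_ne_top _ _)] at this
  have b1 : (P S).toReal - (Q S).toReal ≤ tvS P Q :=
    le_trans (le_abs_self _) (le_ciSup (tvS_bdd P Q) ⟨S, hS⟩)
  have b2 : (Q Sᶜ).toReal - (P Sᶜ).toReal ≤ tvS P Q := by
    refine le_trans ?_ (le_ciSup (tvS_bdd P Q) ⟨Sᶜ, hS.compl⟩)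
    rw [abs_sub_comm]
    exact le_abs_self _
  rw [abs_sub_le_iff]
  constructor <;> linarith

lemma map_pi_one {W : Fin 1 → Type*} [∀ i, MeasurableSpace (W i)] {Ω : Type*}
    [MeasurableSpace Ω] (P : Measure Ω) [IsProbabilityMeasure P]
    (g : ∀ i, Ω → W i) (hg : ∀ i, Measurable (g i)) :
    P.map (fun ω i => g i ω) = Measure.pi (fun i => P.map (g i)) := by
  haveI : ∀ i, IsProbabilityMeasure (P.map (g i)) :=
    fun i => Measure.isProbabilityMeasure_map (hg i).aemeasurable
  refine (Measure.pi_eq fun s hs => ?_).symm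
  rw [Measure.map_apply (measurable_pi_lambda _ hg) (MeasurableSet.univ_pi hs)]
  have he : (fun ω i => g i ω) ⁻¹' Set.univ.pi s = g 0 ⁻¹' s 0 := by
    ext ω
    simp [Set.mem_pi, Fin.forall_fin_one]
  rw [he, Fin.prod_univ_one, Measure.map_apply (hg 0) (hs 0)]

lemma snoc_pi {j : ℕ} {W : Fin (j + 1) → Type*} [∀ i, MeasurableSpace (W i)]
    (ν : ∀ i, Measure (W i)) [∀ i, IsProbabilityMeasure (ν i)] :
    ((Measure.pi fun i : Fin j => ν i.castSucc).prod (ν (Fin.last j))).map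
      (fun p => Fin.snoc (α := W) p.1 p.2) = Measure.pi ν := by
  have hsnoc : Measurable (fun p : (∀ i : Fin j, W i.castSucc) × W (Fin.last j) =>
      Fin.snoc (α := W) p.1 p.2) := by
    apply measurable_pi_lambda
    intro i
    refine Fin.lastCases ?_ ?_ i
    · simp only [Fin.snoc_last]; exact measurable_snd
    · intro k
      simp only [Fin.snoc_castSucc]
      exact (measurable_pi_apply k).comp measurable_fst
  refine (Measure.pi_eq fun s hs => ?_).symm
  rw [Measure.map_apply hsnoc (MeasurableSet.univ_pi hs)]
  have he : (fun p : (∀ i : Fin j, W i.castSucc) × W (Fin.last j) =>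
        Fin.snoc (α := W) p.1 p.2) ⁻¹' Set.univ.pi s
      = (Set.univ.pi fun i : Fin j => s i.castSucc) ×ˢ s (Fin.last j) := by
    ext p
    simp only [Set.mem_preimage, Set.mem_pi, Set.mem_univ, true_implies, Set.mem_prod]
    constructor
    · intro hp
      exact ⟨fun i => by simpa [Fin.snoc_castSucc] using hp i.castSucc,
        by simpa [Fin.snoc_last] using hp (Fin.last j)⟩
    · intro hp i
      refine Fin.lastCases ?_ ?_ i
      · simpa [Fin.snoc_last] using hp.2
      · intro k
        simpa [Fin.snoc_castSucc] using hp.1 k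
  rw [he, Measure.prod_prod, Measure.pi_pi, Fin.prod_univ_castSucc]

end Aux

/-- **Blocking lemma.** If `μ` is a probability measure on `𝒳₁ × ⋯ × 𝒳ₙ` such that, for every
`j ∈ {2,…,n}` (here `0`-indexed: for all `1 ≤ j < n`), the marginal of `μ` on the first `j+1`
coordinates is within variational distance `β` of the product of the marginal on the first `j`
coordinates with the marginal on the `j`-th coordinate, then `μ` is within variational distance
`(n-1)β` of the product of its one-dimensional marginals. -/
theorem stmt_0 (n : ℕ) (hn : 1 ≤ n) (X : ℕ → Type*) [∀ i, MeasurableSpace (X i)]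
    (μ : Measure (∀ i : Fin n, X i)) [IsProbabilityMeasure μ]
    (β : ℝ) (hβ : 0 ≤ β)
    (h : ∀ j : ℕ, 1 ≤ j → ∀ hjn : j < n,
      tvDist (μ.map (prefixProj X hjn))
        (((μ.map (prefixProj X hjn.le)).prod (μ.map (fun x => x ⟨j, hjn⟩))).map
          (fun p => Fin.snoc (α := fun i : Fin (j + 1) => X i) p.1 p.2)) ≤ β) :
    tvDist μ (Measure.pi (fun i : Fin n => μ.map (fun x => x i))) ≤ ((n : ℝ) - 1) * β := by
  have hprefix : ∀ {k : ℕ} (hk : k ≤ n), Measurable (prefixProj X hk) :=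
    fun hk => measurable_pi_lambda _ fun i => measurable_pi_apply _
  haveI hinst1 : ∀ {k : ℕ} (hk : k ≤ n), IsProbabilityMeasure (μ.map (prefixProj X hk)) :=
    fun hk => Measure.isProbabilityMeasure_map (hprefix hk).aemeasurable
  haveI hinst2 : ∀ i : Fin n, IsProbabilityMeasure (μ.map (fun x => x i)) :=
    fun i => Measure.isProbabilityMeasure_map (measurable_pi_apply i).aemeasurable
  have key : ∀ j (h1 : 1 ≤ j) (hj : j ≤ n),
      tvS (μ.map (prefixProj X hj))
        (Measure.pi fun i : Fin j => μ.map fun x => x (Fin.castLE hj i)) ≤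
      ((j : ℝ) - 1) * (β / 2) := by
    intro j h1
    induction j, h1 using Nat.le_induction with
    | base =>
      intro hj
      have he : μ.map (prefixProj X hj)
          = Measure.pi fun i : Fin 1 => μ.map fun x => x (Fin.castLE hj i) :=
        map_pi_one μ (fun i x => x (Fin.castLE hj i)) (fun i => measurable_pi_apply _)
      rw [he, tvS_self]
      norm_num
    | succ j hj1 IH =>
      intro hsn
      have hjn : j < n := hsn
      have hjle : j ≤ n := hjn.le
      haveI : IsProbabilityMeasure (μ.map (fun x : ∀ i : Fin n, X i => x ⟨j, hjn⟩)) :=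
        Measure.isProbabilityMeasure_map (measurable_pi_apply _).aemeasurable
      haveI := hinst1 hjle
      haveI := hinst1 hsn
      haveI : ∀ i : Fin (j + 1),
          IsProbabilityMeasure (μ.map fun x : ∀ i : Fin n, X i => x (Fin.castLE hsn i)) :=
        fun i => Measure.isProbabilityMeasure_map (measurable_pi_apply _).aemeasurable
      set m := μ.map (fun x : ∀ i : Fin n, X i => x (⟨j, hjn⟩ : Fin n)) with hm
      set νj := μ.map (prefixProj X hjle) with hνj
      set πj := Measure.pi fun i : Fin j => μ.map fun x : ∀ i : Fin n, X i =>
        x (Fin.castLE hjle i) with hπj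
      haveI : ∀ i : Fin j,
          IsProbabilityMeasure (μ.map fun x : ∀ i : Fin n, X i => x (Fin.castLE hjle i)) :=
        fun i => Measure.isProbabilityMeasure_map (measurable_pi_apply _).aemeasurable
      have hsnoc : Measurable (fun p : (∀ i : Fin j, X i) × X j =>
          Fin.snoc (α := fun i : Fin (j + 1) => X i) p.1 p.2) := by
        apply measurable_pi_lambda
        intro i
        refine Fin.lastCases ?_ ?_ i
        · simp only [Fin.snoc_last]; exact measurable_snd
        · intro k
          simp only [Fin.snoc_castSucc]
          exact (measurable_pi_apply k).comp measurable_fst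
      haveI : IsProbabilityMeasure ((νj.prod m).map
          (fun p => Fin.snoc (α := fun i : Fin (j + 1) => X i) p.1 p.2)) :=
        Measure.isProbabilityMeasure_map hsnoc.aemeasurable
      haveI : IsProbabilityMeasure ((πj.prod m).map
          (fun p => Fin.snoc (α := fun i : Fin (j + 1) => X i) p.1 p.2)) := by
        have hsnoc' : Measurable (fun p : (∀ i : Fin j, X (Fin.castLE hjle i)) × X j =>
            Fin.snoc (α := fun i : Fin (j + 1) => X i) p.1 p.2) := hsnoc
        exact Measure.isProbabilityMeasure_map hsnoc'.aemeasurable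
      have hC : (Measure.pi fun i : Fin (j + 1) => μ.map fun x : ∀ i : Fin n, X i =>
            x (Fin.castLE hsn i))
          = ((πj.prod m).map
            (fun p => Fin.snoc (α := fun i : Fin (j + 1) => X i) p.1 p.2)) :=
        (snoc_pi (fun i : Fin (j + 1) =>
          μ.map fun x : ∀ i : Fin n, X i => x (Fin.castLE hsn i))).symm
      have hb1 : tvS (μ.map (prefixProj X hsn))
          ((νj.prod m).map
            (fun p => Fin.snoc (α := fun i : Fin (j + 1) => X i) p.1 p.2)) ≤ β / 2 := by
        have := h j hj1 hjn
        rw [tvDist_eq] at this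
        linarith
      have hb2 : tvS ((νj.prod m).map
            (fun p => Fin.snoc (α := fun i : Fin (j + 1) => X i) p.1 p.2))
          ((πj.prod m).map
            (fun p => Fin.snoc (α := fun i : Fin (j + 1) => X i) p.1 p.2)) ≤
          ((j : ℝ) - 1) * (β / 2) :=
        le_trans (tvS_map _ _ hsnoc) (le_trans (tvS_prod νj πj m) (IH hjle))
      have htri := tvS_triangle (μ.map (prefixProj X hsn))
        ((νj.prod m).map
          (fun p => Fin.snoc (α := fun i : Fin (j + 1) => X i) p.1 p.2))
        ((πj.prod m).map
          (fun p => Fin.snoc (α := fun i : Fin (j + 1) => X i) p.1 p.2))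
      rw [hC]
      push_cast
      linarith
  have H := key n hn le_rfl
  have e1 : μ.map (prefixProj X (le_refl n)) = μ := Measure.map_id
  rw [e1] at H
  rw [tvDist_eq]
  have H2 : tvS μ (Measure.pi fun i : Fin n => μ.map fun x => x i) ≤ ((n : ℝ) - 1) * (β / 2) := H
  linarith
end

section
/- There exists an injective map s from the positive integers to finite binary strings satisfying the prefix condition (for i ≠ j, s(i) is not a prefix of s(j)) such that the length of s(i) satisfies ℓ(s(i)) ≤ log₂ i + 2 log₂(log₂ i + 1) + 2 for every i ≥ 1. -/
namespace EliasStmt2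

/-- MSB-first binary representation of `m`, of length `m.size`. -/
def enc (m : ℕ) : List Bool :=
  (List.range m.size).map fun t => m.testBit (m.size - 1 - t)

lemma enc_length (m : ℕ) : (enc m).length = m.size := by
  simp [enc]

lemma enc_getElem (m t : ℕ) (ht : t < (enc m).length) :
    (enc m)[t] = m.testBit (m.size - 1 - t) := by
  simp [enc]

lemma two_pow_size_pred_le {m : ℕ} (hm : 0 < m) : 2 ^ (m.size - 1) ≤ m := by
  have h := Nat.lt_size (m := m.size - 1) (n := m)
  have hs : 0 < m.size := Nat.size_pos.mpr hm
  exact h.mp (by omega)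

lemma testBit_top {m : ℕ} (hm : 0 < m) : m.testBit (m.size - 1) = true := by
  have h1 : 2 ^ (m.size - 1) ≤ m := two_pow_size_pred_le hm
  have hs : 0 < m.size := Nat.size_pos.mpr hm
  have h2 : m < 2 ^ m.size := Nat.lt_size_self m
  have h2' : m < 2 ^ (m.size - 1) * 2 := by
    calc m < 2 ^ m.size := h2
    _ = 2 ^ (m.size - 1) * 2 := by
        rw [← pow_succ]
        congr 1
        omega
  have hdiv : m / 2 ^ (m.size - 1) = 1 :=
    Nat.div_eq_of_lt_le (by rw [one_mul]; exact h1)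
      (by rw [show (1 + 1) * 2 ^ (m.size - 1) = 2 ^ (m.size - 1) * 2 by ring]; exact h2')
  rw [Nat.testBit_eq_decide_div_mod_eq, hdiv]
  rfl

lemma enc_cons {m : ℕ} (hm : 0 < m) : enc m = true :: (enc m).tail := by
  have hl : 0 < (enc m).length := by rw [enc_length]; exact Nat.size_pos.mpr hm
  obtain ⟨a, l, he⟩ : ∃ a l, enc m = a :: l := by
    cases h : enc m with
    | nil => rw [h] at hl; simp at hl
    | cons a l => exact ⟨a, l, rfl⟩
  have h0 := enc_getElem m 0 (by omega)
  simp only [he, List.getElem_cons_zero, Nat.sub_zero] at h0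
  have ha : a = true := by rw [h0]; exact testBit_top hm
  rw [he, ha]
  rfl

lemma enc_inj {a b : ℕ} (h : enc a = enc b) : a = b := by
  have hsize : a.size = b.size := by
    have := congrArg List.length h
    simpa [enc_length] using this
  unfold enc at h
  rw [← hsize] at h
  have hpt := List.map_eq_map_iff.mp h
  apply Nat.eq_of_testBit_eq
  intro n
  by_cases hn : n < a.size
  · have := hpt (a.size - 1 - n) (List.mem_range.mpr (by omega))
    rw [show a.size - 1 - (a.size - 1 - n) = n by omega] at this
    exact this
  · have ha : a.testBit n = false :=
      Nat.testBit_eq_false_of_lt (lt_of_lt_of_le (Nat.lt_size_self a)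
        (Nat.pow_le_pow_right (by norm_num) (by omega)))
    have hb : b.testBit n = false :=
      Nat.testBit_eq_false_of_lt (lt_of_lt_of_le (Nat.lt_size_self b)
        (Nat.pow_le_pow_right (by norm_num) (by omega)))
    rw [ha, hb]

/-- The Elias delta code of `i`. -/
def code (i : ℕ) : List Bool :=
  List.replicate (i.size.size - 1) false ++ enc i.size ++ (enc i).tail

lemma pf_aux : ∀ (k k' : ℕ) (r r' : List Bool),
    (List.replicate k false ++ true :: r) <+: (List.replicate k' false ++ true :: r') →
    k = k' ∧ r <+: r' := by
  intro k
  induction k with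
  | zero =>
    intro k' r r' h
    cases k' with
    | zero =>
      rw [List.replicate_zero, List.nil_append, List.nil_append] at h
      exact ⟨rfl, (List.cons_prefix_cons.mp h).2⟩
    | succ n =>
      exfalso
      rw [List.replicate_zero, List.nil_append, List.replicate_succ,
        List.cons_append] at h
      have := (List.cons_prefix_cons.mp h).1
      simp at this
  | succ n ih =>
    intro k' r r' h
    cases k' with
    | zero =>
      exfalso
      rw [List.replicate_zero, List.nil_append, List.replicate_succ,
        List.cons_append] at h
      have := (List.cons_prefix_cons.mp h).1
      simp at this
    | succ m =>
      rw [List.replicate_succ, List.cons_append, List.replicate_succ,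
        List.cons_append] at h
      obtain ⟨hk, hr⟩ := ih m r r' (List.cons_prefix_cons.mp h).2
      exact ⟨by omega, hr⟩

lemma code_eq (i : ℕ) (hi : 0 < i) :
    code i = List.replicate (i.size.size - 1) false ++
      true :: ((enc i.size).tail ++ (enc i).tail) := by
  rw [code, List.append_assoc]
  congr 1
  rw [enc_cons (Nat.size_pos.mpr hi)]
  rfl

lemma tail_len (i : ℕ) : (enc i.size).tail.length = i.size.size - 1 := by
  rw [List.length_tail, enc_length]

/-- The key decoding lemma: a code is never a proper prefix of another. -/
lemma key {i j : ℕ} (hi : 0 < i) (hj : 0 < j) (h : code i <+: code j) : i = j := by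
  have h0 := h
  rw [code_eq i hi, code_eq j hj] at h
  obtain ⟨hk, hr⟩ := pf_aux _ _ _ _ h
  obtain ⟨t, ht⟩ := hr
  have h1 : (enc i.size).tail = (enc j.size).tail := by
    have e1 : List.take (i.size.size - 1) ((enc i.size).tail ++ ((enc i).tail ++ t))
        = (enc i.size).tail := List.take_left' (tail_len i)
    have e2 : List.take (i.size.size - 1) ((enc j.size).tail ++ (enc j).tail)
        = (enc j.size).tail := by rw [hk]; exact List.take_left' (tail_len j)
    rw [← e1, ← List.append_assoc, ht, e2]
  have hsz : i.size = j.size := by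
    apply enc_inj
    rw [enc_cons (Nat.size_pos.mpr hi), enc_cons (Nat.size_pos.mpr hj), h1]
  have hlen : (code i).length = (code j).length := by
    have hti : (enc i).tail.length = i.size - 1 := by rw [List.length_tail, enc_length]
    have htj : (enc j).tail.length = j.size - 1 := by rw [List.length_tail, enc_length]
    simp [code, enc_length, hti, htj, hsz]
  have hcode : code i = code j := h0.eq_of_length hlen
  have h2 : (enc i).tail = (enc j).tail := by
    rw [code, code, hsz] at hcode
    exact List.append_cancel_left hcode
  apply enc_inj
  rw [enc_cons hi, enc_cons hj, h2]

lemma code_length (i : ℕ) (hi : 0 < i) :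
    (code i).length = 2 * (i.size.size - 1) + (i.size - 1) + 1 := by
  have hs : 0 < i.size := Nat.size_pos.mpr hi
  have hss : 0 < i.size.size := Nat.size_pos.mpr hs
  have hti : (enc i).tail.length = i.size - 1 := by rw [List.length_tail, enc_length]
  simp only [code, List.length_append, List.length_replicate, enc_length, hti]
  omega

lemma nat_le_logb {g : ℕ} {x : ℝ} (hx : (2:ℝ) ^ g ≤ x) : (g : ℝ) ≤ Real.logb 2 x := by
  have hxpos : (0:ℝ) < x := lt_of_lt_of_le (by positivity) hx
  have := (Real.logb_le_logb (by norm_num : (1:ℝ) < 2) (by positivity) hxpos).mpr hx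
  calc (g : ℝ) = Real.logb 2 ((2:ℝ) ^ g) := by
        rw [Real.logb_pow]
        simp [Real.logb_self_eq_one]
      _ ≤ Real.logb 2 x := this

end EliasStmt2

/-- **Elias' universal representation of the integers.** There is an injective, prefix-free
encoding `s` of the positive integers into finite binary strings with
`ℓ(s(i)) ≤ log₂ i + 2 log₂(log₂ i + 1) + 2`. -/
theorem stmt_2 :
    ∃ s : ℕ+ → List Bool,
      Function.Injective s ∧
      (∀ i j : ℕ+, i ≠ j → ¬ (s i <+: s j)) ∧
      (∀ i : ℕ+, ((s i).length : ℝ) ≤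
        Real.logb 2 (i : ℝ) + 2 * Real.logb 2 (Real.logb 2 (i : ℝ) + 1) + 2) := by
  refine ⟨fun i => EliasStmt2.code i, ?_, ?_, ?_⟩
  · intro i j h
    have h' : EliasStmt2.code (i : ℕ) = EliasStmt2.code (j : ℕ) := h
    exact PNat.coe_injective (EliasStmt2.key i.pos j.pos (h' ▸ List.prefix_refl _))
  · intro i j hij h
    exact hij (PNat.coe_injective (EliasStmt2.key i.pos j.pos h))
  · intro i
    set n : ℕ := (i : ℕ) with hn
    have hi : 0 < n := i.pos
    set g : ℕ := n.size - 1 with hg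
    set hh : ℕ := n.size.size - 1 with hhdef
    have hs : 0 < n.size := Nat.size_pos.mpr hi
    have hss : 0 < n.size.size := Nat.size_pos.mpr hs
    have hlen : (EliasStmt2.code n).length = 2 * hh + g + 1 := by
      rw [EliasStmt2.code_length n hi]
    have hg1 : (2:ℝ) ^ g ≤ (n : ℝ) := by
      have := EliasStmt2.two_pow_size_pred_le hi
      exact_mod_cast this
    have hglog : (g : ℝ) ≤ Real.logb 2 (n : ℝ) := EliasStmt2.nat_le_logb hg1
    have hh1 : (2:ℝ) ^ hh ≤ ((g : ℝ) + 1) := by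
      have h2 : 2 ^ hh ≤ n.size := EliasStmt2.two_pow_size_pred_le hs
      have hgs : n.size = g + 1 := by omega
      rw [hgs] at h2
      exact_mod_cast h2
    have hh2 : (2:ℝ) ^ hh ≤ Real.logb 2 (n : ℝ) + 1 := le_trans hh1 (by linarith)
    have hhlog : (hh : ℝ) ≤ Real.logb 2 (Real.logb 2 (n : ℝ) + 1) :=
      EliasStmt2.nat_le_logb hh2
    rw [hlen]
    push_cast
    linarith
end

section
/- Let m, m' ∈ ℝ and σ, σ' > 0, and let N(m, σ²) and N(m', σ'²) be the Gaussian distributions on ℝ with means m, m' and variances σ², σ'². Then the Kullback–Leibler divergence satisfies D(N(m, σ²) ‖ N(m', σ'²)) ≤ (1 + σ'/σ)² · ((m − m')² + (σ − σ')²) / (2 σ'²). -/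
open MeasureTheory ProbabilityTheory
open scoped Classical

/-- The Kullback–Leibler divergence (in nats): `D(P‖Q) = ∫ log(dP/dQ) dP` when `P ≪ Q` (and the
log-likelihood ratio is integrable), and `+∞` otherwise. -/
noncomputable def klDiv {Z : Type*} [MeasurableSpace Z] (P Q : Measure Z) : ENNReal :=
  if P ≪ Q ∧ Integrable (llr P Q) P then ENNReal.ofReal (∫ z, llr P Q z ∂P) else ⊤

section Aux

open Real Set
open scoped ENNReal NNReal

private lemma stmt5_oddJ {b : ℝ} : ∫ x : ℝ, x * Real.exp (-b * x ^ 2) = 0 := by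
  have h := integral_neg_eq_self (fun x : ℝ => x * Real.exp (-b * x ^ 2)) volume
  simp only [neg_mul, neg_sq, integral_neg] at h
  have : ∫ x : ℝ, x * Real.exp (-(b * x ^ 2)) = 0 := by linarith
  simpa [neg_mul] using this

private lemma stmt5_pdf_eq {σ : ℝ} (hσ : 0 < σ) (y : ℝ) :
    Real.exp (-y^2/(2*σ^2)) = Real.exp (-((2*σ^2)⁻¹) * y^2) := by
  rw [show -y^2 / (2*σ^2) = -((2*σ^2)⁻¹) * y^2 by field_simp]

private lemma stmt5_J2 {b : ℝ} (hb : 0 < b) :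
    ∫ x : ℝ, x ^ 2 * Real.exp (-b * x ^ 2) = b ^ (-(3:ℝ)/2) * Real.sqrt π / 2 := by
  have he : ∫ x : ℝ, x ^ 2 * Real.exp (-b * x ^ 2)
      = ∫ x : ℝ, (fun y => y ^ 2 * Real.exp (-b * y ^ 2)) |x| := by
    congr 1; ext x; simp [sq_abs]
  rw [he, integral_comp_abs (f := fun y => y ^ 2 * Real.exp (-b * y ^ 2))]
  rw [show ∫ x in Ioi (0:ℝ), x ^ 2 * Real.exp (-b * x ^ 2)
      = b ^ (-((2:ℝ)+1)/2) * (1/2) * Real.Gamma (((2:ℝ)+1)/2) by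
    rw [← integral_rpow_mul_exp_neg_mul_rpow (by norm_num : (0:ℝ) < 2)
      (by norm_num : (-1:ℝ) < 2) hb]
    refine setIntegral_congr_fun measurableSet_Ioi (fun x hx => ?_)
    norm_num [Real.rpow_natCast]]
  rw [show ((2:ℝ)+1)/2 = 1/2 + 1 by norm_num, Real.Gamma_add_one (by norm_num),
    Real.Gamma_one_half_eq]
  ring_nf

private lemma stmt5_val2 {σ : ℝ} (hσ : 0 < σ) :
    ∫ x : ℝ, x ^ 2 * ((Real.sqrt (2*π*σ^2))⁻¹ * Real.exp (-x^2 / (2*σ^2))) = σ ^ 2 := by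
  have h2σ : (0:ℝ) < 2*σ^2 := by positivity
  have hb : (0:ℝ) < (2*σ^2)⁻¹ := by positivity
  have heq : ∀ x : ℝ, x ^ 2 * ((Real.sqrt (2*π*σ^2))⁻¹ * Real.exp (-x^2 / (2*σ^2)))
      = (Real.sqrt (2*π*σ^2))⁻¹ * (x ^ 2 * Real.exp (-((2*σ^2)⁻¹) * x^2)) := by
    intro x
    rw [show -x^2 / (2*σ^2) = -((2*σ^2)⁻¹) * x^2 by field_simp]
    ring
  simp_rw [heq]
  rw [MeasureTheory.integral_const_mul, stmt5_J2 hb]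
  have hinv : ((2*σ^2)⁻¹ : ℝ) ^ (-(3:ℝ)/2) = (2*σ^2) * Real.sqrt (2*σ^2) := by
    rw [show (-(3:ℝ)/2) = -(3/2) by ring, Real.rpow_neg (by positivity), Real.inv_rpow h2σ.le,
      inv_inv, show (3:ℝ)/2 = 1 + 1/2 by norm_num, Real.rpow_add h2σ, Real.rpow_one,
      ← Real.sqrt_eq_rpow]
  rw [hinv, show (2*π*σ^2 : ℝ) = π * (2*σ^2) by ring, Real.sqrt_mul pi_pos.le, mul_inv]
  have h1 : Real.sqrt (2*σ^2) ≠ 0 := by positivity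
  have h2 : Real.sqrt π ≠ 0 := by positivity
  field_simp

private lemma stmt5_int2 {σ : ℝ} (hσ : 0 < σ) :
    Integrable (fun y : ℝ => y^2 * ((Real.sqrt (2*π*σ^2))⁻¹ * Real.exp (-y^2/(2*σ^2)))) := by
  have hb : (0:ℝ) < (2*σ^2)⁻¹ := by positivity
  have h := (integrable_rpow_mul_exp_neg_mul_sq hb (by norm_num : (-1:ℝ) < 2)).const_mul
    ((Real.sqrt (2*π*σ^2))⁻¹)
  refine h.congr (Filter.Eventually.of_forall fun y => ?_)
  simp only [stmt5_pdf_eq hσ]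
  rw [show ((2:ℝ):ℝ) = ((2:ℕ):ℝ) by norm_num, Real.rpow_natCast]
  ring

private lemma stmt5_int1 {σ : ℝ} (hσ : 0 < σ) :
    Integrable (fun y : ℝ => y * ((Real.sqrt (2*π*σ^2))⁻¹ * Real.exp (-y^2/(2*σ^2)))) := by
  have hb : (0:ℝ) < (2*σ^2)⁻¹ := by positivity
  have h := (integrable_mul_exp_neg_mul_sq hb).const_mul ((Real.sqrt (2*π*σ^2))⁻¹)
  refine h.congr (Filter.Eventually.of_forall fun y => ?_)
  simp only [stmt5_pdf_eq hσ]; ring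

private lemma stmt5_int0 {σ : ℝ} (hσ : 0 < σ) :
    Integrable (fun y : ℝ => (Real.sqrt (2*π*σ^2))⁻¹ * Real.exp (-y^2/(2*σ^2))) := by
  have hb : (0:ℝ) < (2*σ^2)⁻¹ := by positivity
  have h := (integrable_exp_neg_mul_sq hb).const_mul ((Real.sqrt (2*π*σ^2))⁻¹)
  refine h.congr (Filter.Eventually.of_forall fun y => ?_)
  simp only [stmt5_pdf_eq hσ]

private lemma stmt5_val1 {σ : ℝ} (hσ : 0 < σ) :
    ∫ y : ℝ, y * ((Real.sqrt (2*π*σ^2))⁻¹ * Real.exp (-y^2/(2*σ^2))) = 0 := by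
  have h : ∀ y : ℝ, y * ((Real.sqrt (2*π*σ^2))⁻¹ * Real.exp (-y^2/(2*σ^2)))
      = (Real.sqrt (2*π*σ^2))⁻¹ * (y * Real.exp (-((2*σ^2)⁻¹) * y^2)) := by
    intro y; rw [stmt5_pdf_eq hσ]; ring
  simp_rw [h, MeasureTheory.integral_const_mul]
  rw [stmt5_oddJ]; ring

private lemma stmt5_val0 {σ : ℝ} (hσ : 0 < σ) :
    ∫ y : ℝ, (Real.sqrt (2*π*σ^2))⁻¹ * Real.exp (-y^2/(2*σ^2)) = 1 := by
  have hb : (0:ℝ) < (2*σ^2)⁻¹ := by positivity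
  have h : ∀ y : ℝ, (Real.sqrt (2*π*σ^2))⁻¹ * Real.exp (-y^2/(2*σ^2))
      = (Real.sqrt (2*π*σ^2))⁻¹ * Real.exp (-((2*σ^2)⁻¹) * y^2) := by
    intro y; rw [stmt5_pdf_eq hσ]
  simp_rw [h, MeasureTheory.integral_const_mul, integral_gaussian]
  rw [show π / (2*σ^2)⁻¹ = 2*π*σ^2 by field_simp]
  rw [inv_mul_cancel₀]
  positivity

private lemma stmt5_cent {σ : ℝ} (hσ : 0 < σ) (d : ℝ) :
    Integrable (fun y : ℝ => (y+d)^2 * ((Real.sqrt (2*π*σ^2))⁻¹ * Real.exp (-y^2/(2*σ^2)))) ∧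
    ∫ y : ℝ, (y+d)^2 * ((Real.sqrt (2*π*σ^2))⁻¹ * Real.exp (-y^2/(2*σ^2))) = σ^2 + d^2 := by
  set p : ℝ → ℝ := fun y => (Real.sqrt (2*π*σ^2))⁻¹ * Real.exp (-y^2/(2*σ^2)) with hp
  have hpt : ∀ y : ℝ, (y+d)^2 * p y = y^2 * p y + (2*d) * (y * p y) + d^2 * p y := by
    intro y; ring
  have hint : Integrable (fun y : ℝ => (y+d)^2 * p y) := by
    refine (((stmt5_int2 hσ).add ((stmt5_int1 hσ).const_mul (2*d))).add
      ((stmt5_int0 hσ).const_mul (d^2))).congr (Filter.Eventually.of_forall fun y => ?_)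
    simp only [Pi.add_apply]
    rw [hpt y]
  refine ⟨hint, ?_⟩
  calc ∫ y : ℝ, (y+d)^2 * p y
      = ∫ y : ℝ, (y^2 * p y + (2*d) * (y * p y) + d^2 * p y) := by
        congr 1; ext y; rw [hpt y]
    _ = (∫ y : ℝ, y^2 * p y) + ((2*d) * ∫ y : ℝ, y * p y) + (d^2 * ∫ y : ℝ, p y) := by
        have hA := stmt5_int2 hσ
        have hB := (stmt5_int1 hσ).const_mul (2*d)
        have hC := (stmt5_int0 hσ).const_mul (d^2)
        have e1 : ∫ y : ℝ, (y^2 * p y + (2*d) * (y * p y) + d^2 * p y)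
            = (∫ y : ℝ, (y^2 * p y + (2*d) * (y * p y))) + ∫ y : ℝ, d^2 * p y :=
          integral_add (hA.add hB) hC
        have e2 : ∫ y : ℝ, (y^2 * p y + (2*d) * (y * p y))
            = (∫ y : ℝ, y^2 * p y) + ∫ y : ℝ, (2*d) * (y * p y) := integral_add hA hB
        rw [e1, e2, MeasureTheory.integral_const_mul, MeasureTheory.integral_const_mul]
    _ = σ^2 + d^2 := by rw [stmt5_val2 hσ, stmt5_val1 hσ, stmt5_val0 hσ]; ring

private lemma stmt5_gauss_moment (m c σ : ℝ) (hσ : 0 < σ) :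
    Integrable (fun x : ℝ => (x - c)^2) (gaussianReal m (Real.toNNReal σ ^ 2)) ∧
    ∫ x, (x - c)^2 ∂(gaussianReal m (Real.toNNReal σ ^ 2)) = σ^2 + (m - c)^2 := by
  set v : ℝ≥0 := Real.toNNReal σ ^ 2 with hv_def
  have hv : v ≠ 0 := pow_ne_zero _ (Real.toNNReal_pos.mpr hσ).ne'
  have hvr : ((v:ℝ)) = σ^2 := by
    rw [hv_def]; push_cast [Real.coe_toNNReal _ hσ.le]; ring
  have hpdf : ∀ x : ℝ, gaussianPDFReal m v x
      = (Real.sqrt (2*π*σ^2))⁻¹ * Real.exp (-((x-m):ℝ)^2/(2*σ^2)) := by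
    intro x; rw [gaussianPDFReal, hvr]
  rw [gaussianReal_of_var_ne_zero _ hv]
  have hf : Measurable (fun x => (gaussianPDFReal m v x).toNNReal) :=
    (measurable_gaussianPDFReal m v).real_toNNReal
  have hd : volume.withDensity (gaussianPDF m v)
      = volume.withDensity (fun x => ((gaussianPDFReal m v x).toNNReal : ℝ≥0∞)) := rfl
  rw [hd]
  rw [integrable_withDensity_iff_integrable_smul hf,
      integral_withDensity_eq_integral_smul hf]
  have hsm : ∀ x : ℝ, (gaussianPDFReal m v x).toNNReal • ((x - c)^2 : ℝ)
      = (x - m + (m - c))^2 * ((Real.sqrt (2*π*σ^2))⁻¹ * Real.exp (-((x-m):ℝ)^2/(2*σ^2))) := by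
    intro x
    rw [NNReal.smul_def, smul_eq_mul, Real.coe_toNNReal _ (gaussianPDFReal_nonneg _ _ _), hpdf x]
    ring
  obtain ⟨hG, hGv⟩ := stmt5_cent hσ (m - c)
  constructor
  · refine (hG.comp_sub_right m).congr (Filter.Eventually.of_forall fun x => ?_)
    simpa using (hsm x).symm
  · calc ∫ x : ℝ, (gaussianPDFReal m v x).toNNReal • ((x - c)^2 : ℝ)
        = ∫ x : ℝ, (fun y => (y + (m-c))^2 *
            ((Real.sqrt (2*π*σ^2))⁻¹ * Real.exp (-y^2/(2*σ^2)))) (x - m) := by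
          congr 1; ext x; rw [hsm x]
      _ = σ^2 + (m - c)^2 := by
          rw [MeasureTheory.integral_sub_right_eq_self (fun y => (y + (m-c))^2 *
            ((Real.sqrt (2*π*σ^2))⁻¹ * Real.exp (-y^2/(2*σ^2)))) m]
          exact hGv

private lemma stmt5_llr_eq (m m' σ σ' : ℝ) (hσ : 0 < σ) (hσ' : 0 < σ') :
    llr (gaussianReal m (Real.toNNReal σ ^ 2)) (gaussianReal m' (Real.toNNReal σ' ^ 2))
      =ᵐ[gaussianReal m (Real.toNNReal σ ^ 2)]
      fun x => Real.log (σ'/σ) + (x-m')^2/(2*σ'^2) - (x-m)^2/(2*σ^2) := by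
  set v : ℝ≥0 := Real.toNNReal σ ^ 2 with hv_def
  set v' : ℝ≥0 := Real.toNNReal σ' ^ 2 with hv'_def
  have hv : v ≠ 0 := pow_ne_zero _ (Real.toNNReal_pos.mpr hσ).ne'
  have hv' : v' ≠ 0 := pow_ne_zero _ (Real.toNNReal_pos.mpr hσ').ne'
  have hvr : ((v:ℝ)) = σ^2 := by rw [hv_def]; push_cast [Real.coe_toNNReal _ hσ.le]; ring
  have hv'r : ((v':ℝ)) = σ'^2 := by rw [hv'_def]; push_cast [Real.coe_toNNReal _ hσ'.le]; ring
  set P := gaussianReal m v with hP_def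
  set Q := gaussianReal m' v' with hQ_def
  have h1 : P.rnDeriv (volume.withDensity (gaussianPDF m' v'))
      =ᵐ[volume] fun x => (gaussianPDF m' v' x)⁻¹ * P.rnDeriv volume x :=
    Measure.rnDeriv_withDensity_right P volume (measurable_gaussianPDF m' v').aemeasurable
      (Filter.Eventually.of_forall fun x => (gaussianPDF_pos _ hv' x).ne')
      (Filter.Eventually.of_forall fun x => ENNReal.ofReal_ne_top)
  have h2 : P.rnDeriv volume =ᵐ[volume] gaussianPDF m v := rnDeriv_gaussianReal m v
  have hQw : Q = volume.withDensity (gaussianPDF m' v') := gaussianReal_of_var_ne_zero _ hv'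
  have h3 : P.rnDeriv Q =ᵐ[volume]
      fun x => (gaussianPDF m' v' x)⁻¹ * gaussianPDF m v x := by
    rw [hQw]
    filter_upwards [h1, h2] with x hx1 hx2
    rw [hx1, hx2]
  have hPvol : P ≪ volume := gaussianReal_absolutelyContinuous m hv
  have h4 : P.rnDeriv Q =ᵐ[P] fun x => (gaussianPDF m' v' x)⁻¹ * gaussianPDF m v x :=
    hPvol.ae_eq h3
  filter_upwards [h4] with x hx
  rw [llr, hx]
  have hgpos : 0 < gaussianPDFReal m v x := gaussianPDFReal_pos _ _ _ hv
  have hg'pos : 0 < gaussianPDFReal m' v' x := gaussianPDFReal_pos _ _ _ hv'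
  have htr : (((gaussianPDF m' v' x)⁻¹ * gaussianPDF m v x).toReal)
      = gaussianPDFReal m v x / gaussianPDFReal m' v' x := by
    rw [ENNReal.toReal_mul, ENNReal.toReal_inv, gaussianPDF, gaussianPDF,
      ENNReal.toReal_ofReal hgpos.le, ENNReal.toReal_ofReal hg'pos.le]
    rw [div_eq_inv_mul]
  rw [htr, Real.log_div hgpos.ne' hg'pos.ne']
  have hlogpdf : ∀ (μ s : ℝ) (w : ℝ≥0), (0 < s) → ((w:ℝ) = s^2) →
      Real.log (gaussianPDFReal μ w x) = -Real.log (Real.sqrt (2*π) * s) - (x-μ)^2/(2*s^2) := by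
    intro μ s w hs hw
    rw [gaussianPDFReal, hw, Real.log_mul (by positivity) (Real.exp_ne_zero _),
      Real.log_exp, Real.log_inv, show (2*π*s^2 : ℝ) = (2*π)*s^2 by ring,
      Real.sqrt_mul (by positivity), Real.sqrt_sq hs.le]
    ring
  rw [hlogpdf m σ v hσ hvr, hlogpdf m' σ' v' hσ' hv'r]
  have hlog : Real.log (Real.sqrt (2*π) * σ') - Real.log (Real.sqrt (2*π) * σ)
      = Real.log (σ'/σ) := by
    rw [Real.log_mul (by positivity) hσ'.ne', Real.log_mul (by positivity) hσ.ne',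
      Real.log_div hσ'.ne' hσ.ne']
    ring
  linarith [hlog]

end Aux

open scoped ENNReal NNReal

/-- **KL divergence bound for Gaussians.** For `m, m' ∈ ℝ` and `σ, σ' > 0`,
`D(N(m,σ²) ‖ N(m',σ'²)) ≤ (1 + σ'/σ)² ((m-m')² + (σ-σ')²) / (2σ'²)`. -/
theorem stmt_5 (m m' σ σ' : ℝ) (hσ : 0 < σ) (hσ' : 0 < σ') :
    klDiv (gaussianReal m (Real.toNNReal σ ^ 2)) (gaussianReal m' (Real.toNNReal σ' ^ 2)) ≤
      ENNReal.ofReal ((1 + σ' / σ) ^ 2 * ((m - m') ^ 2 + (σ - σ') ^ 2) / (2 * σ' ^ 2)) := by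
  set v : ℝ≥0 := Real.toNNReal σ ^ 2 with hv_def
  set v' : ℝ≥0 := Real.toNNReal σ' ^ 2 with hv'_def
  have hv : v ≠ 0 := pow_ne_zero _ (Real.toNNReal_pos.mpr hσ).ne'
  have hv' : v' ≠ 0 := pow_ne_zero _ (Real.toNNReal_pos.mpr hσ').ne'
  set P := gaussianReal m v with hP_def
  set Q := gaussianReal m' v' with hQ_def
  have hPQ : P ≪ Q :=
    (gaussianReal_absolutelyContinuous m hv).trans (gaussianReal_absolutelyContinuous' m' hv')
  set L : ℝ → ℝ := fun x => Real.log (σ'/σ) + (x-m')^2/(2*σ'^2) - (x-m)^2/(2*σ^2) with hL_def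
  have hllr : llr P Q =ᵐ[P] L := stmt5_llr_eq m m' σ σ' hσ hσ'
  obtain ⟨hi', hval'⟩ := stmt5_gauss_moment m m' σ hσ
  obtain ⟨hi, hval⟩ := stmt5_gauss_moment m m σ hσ
  have hIntL : Integrable L P := by
    have h : Integrable (fun x : ℝ =>
        Real.log (σ'/σ) + (x-m')^2/(2*σ'^2) - (x-m)^2/(2*σ^2)) P :=
      ((integrable_const _).add (hi'.div_const _)).sub (hi.div_const _)
    exact h
  have hIntllr : Integrable (llr P Q) P := hIntL.congr hllr.symm
  have hval_L : ∫ x, L x ∂P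
      = Real.log (σ'/σ) + (σ^2 + (m - m')^2)/(2*σ'^2) - 1/2 := by
    have e1 : ∫ x, L x ∂P = (∫ x, (Real.log (σ'/σ) + (x-m')^2/(2*σ'^2)) ∂P)
        - ∫ x, (x-m)^2/(2*σ^2) ∂P :=
      integral_sub ((integrable_const _).add (hi'.div_const _)) (hi.div_const _)
    have e2 : ∫ x, (Real.log (σ'/σ) + (x-m')^2/(2*σ'^2)) ∂P
        = (∫ _x, Real.log (σ'/σ) ∂P) + ∫ x, (x-m')^2/(2*σ'^2) ∂P :=
      integral_add (integrable_const _) (hi'.div_const _)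
    have e3 : ∫ x, (x-m')^2/(2*σ'^2) ∂P = (∫ x, (x-m')^2 ∂P) / (2*σ'^2) :=
      integral_div _ _
    have e4 : ∫ x, (x-m)^2/(2*σ^2) ∂P = (∫ x, (x-m)^2 ∂P) / (2*σ^2) :=
      integral_div _ _
    rw [e1, e2, e3, e4, hval, hval', integral_const]
    simp only [measure_univ, probReal_univ, ENNReal.toReal_one, one_smul]
    have hσ2 : (σ:ℝ)^2 ≠ 0 := by positivity
    field_simp
    ring
  have hkl : klDiv P Q = ENNReal.ofReal (∫ x, L x ∂P) := by
    rw [klDiv, if_pos ⟨hPQ, hIntllr⟩, integral_congr_ae hllr]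
  rw [hkl, hval_L]
  apply ENNReal.ofReal_le_ofReal
  -- real inequality
  have hlog : Real.log (σ'/σ) ≤ σ'/σ - 1 := Real.log_le_sub_one_of_pos (by positivity)
  have hc : (0:ℝ) < 2*σ^2*σ'^2 := by positivity
  have h1 : σ'/σ - 1 + (σ^2 + (m - m')^2)/(2*σ'^2) - 1/2
      ≤ (1 + σ' / σ) ^ 2 * ((m - m') ^ 2 + (σ - σ') ^ 2) / (2 * σ' ^ 2) := by
    rw [← mul_le_mul_iff_of_pos_right hc]
    have e1 : (σ'/σ - 1 + (σ^2 + (m - m')^2)/(2*σ'^2) - 1/2) * (2*σ^2*σ'^2)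
        = 2*σ*σ'^3 - 3*σ^2*σ'^2 + σ^4 + (m-m')^2*σ^2 := by
      field_simp
      ring
    have e2 : (1 + σ' / σ) ^ 2 * ((m - m') ^ 2 + (σ - σ') ^ 2) / (2 * σ' ^ 2) * (2*σ^2*σ'^2)
        = (σ+σ')^2*((m-m')^2 + (σ-σ')^2) := by
      field_simp
    rw [e1, e2]
    nlinarith [sq_nonneg (σ'*(σ-σ')), mul_nonneg (sq_nonneg (m-m'))
      (by positivity : (0:ℝ) ≤ σ'*(2*σ+σ')), sq_nonneg (σ-σ')]
  linarith
end

section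
/- Let θ = (m, σ) with m ∈ ℝ and σ > 0, and fix δ ∈ (0, σ). Then for every θ' = (m', σ') with σ' > 0 and ‖θ − θ'‖ < δ (Euclidean norm on ℝ²), and for every n ≥ 1, the variational distance between the n-fold products of the corresponding Gaussian distributions satisfies d(N(m, σ²)^⊗n, N(m', σ'²)^⊗n) ≤ √n · (3/(σ − δ)) · ‖θ − θ'‖. -/
open MeasureTheory ProbabilityTheory

open scoped ENNReal NNReal

section AuxTV
open Real

lemma lintegral_pi_prod {n : ℕ} (μ : Measure ℝ) [SigmaFinite μ] (f : Fin n → ℝ → ℝ≥0∞)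
    (hf : ∀ i, Measurable (f i)) :
    ∫⁻ x : Fin n → ℝ, ∏ i, f i (x i) ∂(Measure.pi fun _ => μ) = ∏ i, ∫⁻ y, f i y ∂μ := by
  induction n with
  | zero => simp
  | succ n ih =>
    have hmp := measurePreserving_piFinSuccAbove (fun _ : Fin (n + 1) => μ) 0
    have hG : Measurable fun z : ℝ × (Fin n → ℝ) => f 0 z.1 * ∏ j, f (Fin.succAbove 0 j) (z.2 j) := by
      refine ((hf 0).comp measurable_fst).mul ?_
      exact Finset.measurable_prod _ fun j _ =>
        (hf _).comp ((measurable_pi_apply j).comp measurable_snd)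
    have h1 : ∫⁻ x : Fin (n + 1) → ℝ, ∏ i, f i (x i) ∂(Measure.pi fun _ => μ)
        = ∫⁻ z : ℝ × (Fin n → ℝ), f 0 z.1 * ∏ j, f (Fin.succAbove 0 j) (z.2 j)
            ∂(μ.prod (Measure.pi fun _ => μ)) := by
      rw [← hmp.lintegral_comp hG]
      refine lintegral_congr fun x => ?_
      simp only [MeasurableEquiv.piFinSuccAbove]
      rw [Fin.prod_univ_succAbove (fun i => f i (x i)) 0]
      rfl
    rw [h1, lintegral_prod_mul (f := f 0)
      (g := fun y : Fin n → ℝ => ∏ j, f (Fin.succAbove 0 j) (y j)) ((hf 0).aemeasurable)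
      ((Finset.measurable_prod _ fun j _ => (hf _).comp (measurable_pi_apply j)).aemeasurable),
      ih _ fun j => hf _, Fin.prod_univ_succAbove (fun i => ∫⁻ y, f i y ∂μ) 0]

lemma pi_withDensity {n : ℕ} (μ : Measure ℝ) [SigmaFinite μ] (f : ℝ → ℝ≥0∞) (hf : Measurable f)
    [SigmaFinite (μ.withDensity f)] :
    Measure.pi (fun _ : Fin n => μ.withDensity f)
      = (Measure.pi fun _ : Fin n => μ).withDensity fun x => ∏ i, f (x i) := by
  refine Measure.pi_eq fun s hs => ?_
  rw [withDensity_apply _ (MeasurableSet.univ_pi hs),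
    ← lintegral_indicator (MeasurableSet.univ_pi hs)]
  have hind : ∀ x : Fin n → ℝ, (Set.pi Set.univ s).indicator (fun x => ∏ i, f (x i)) x
      = ∏ i, (s i).indicator f (x i) := by
    intro x
    by_cases hx : x ∈ Set.pi Set.univ s
    · rw [Set.indicator_of_mem hx]
      exact Finset.prod_congr rfl fun i _ => (Set.indicator_of_mem (hx i (Set.mem_univ i)) f).symm
    · rw [Set.indicator_of_notMem hx]
      obtain ⟨i, hi⟩ : ∃ i, x i ∉ s i := by simpa [Set.mem_pi] using hx
      exact (Finset.prod_eq_zero (Finset.mem_univ i) (Set.indicator_of_notMem hi f)).symm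
    
  simp_rw [hind]
  rw [lintegral_pi_prod μ _ fun i => hf.indicator (hs i)]
  exact Finset.prod_congr rfl fun i _ => by
    rw [lintegral_indicator (hs i), withDensity_apply _ (hs i)]


lemma tv_hellinger_bound {α : Type*} [MeasurableSpace α] (μ : Measure α)
    (u w : α → ℝ) (hu : Measurable u) (hw : Measurable w)
    (hu0 : ∀ x, 0 ≤ u x) (hw0 : ∀ x, 0 ≤ w x)
    (hu1 : ∫⁻ x, ENNReal.ofReal (u x ^ 2) ∂μ = 1)
    (hw1 : ∫⁻ x, ENNReal.ofReal (w x ^ 2) ∂μ = 1)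
    {A : Set α} (hA : MeasurableSet A) :
    |(μ.withDensity (fun x => ENNReal.ofReal (u x ^ 2)) A).toReal
      - (μ.withDensity (fun x => ENNReal.ofReal (w x ^ 2)) A).toReal|
      ≤ Real.sqrt (1 - (∫⁻ x, ENNReal.ofReal (u x * w x) ∂μ).toReal ^ 2) := by
  set p : α → ℝ≥0∞ := fun x => ENNReal.ofReal (u x ^ 2) with hp
  set q : α → ℝ≥0∞ := fun x => ENNReal.ofReal (w x ^ 2) with hq
  have hpm : Measurable p := (hu.pow_const 2).ennreal_ofReal
  have hqm : Measurable q := (hw.pow_const 2).ennreal_ofReal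
  have huwm : Measurable fun x => ENNReal.ofReal (u x * w x) := (hu.mul hw).ennreal_ofReal
  set R : ℝ≥0∞ := ∫⁻ x, ENNReal.ofReal (u x * w x) ∂μ with hR
  -- R ≤ 1
  have hR_le : R ≤ 1 := by
    have h2 : (2 : ℝ≥0∞) * R ≤ 2 := by
      have : ∀ x, 2 * ENNReal.ofReal (u x * w x) ≤ p x + q x := by
        intro x
        rw [hp, hq, ← ENNReal.ofReal_add (sq_nonneg _) (sq_nonneg _),
          show (2 : ℝ≥0∞) = ENNReal.ofReal 2 by simp,
          ← ENNReal.ofReal_mul (by norm_num : (0:ℝ) ≤ 2)]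
        exact ENNReal.ofReal_le_ofReal (by nlinarith [sq_nonneg (u x - w x)])
      calc (2 : ℝ≥0∞) * R = ∫⁻ x, 2 * ENNReal.ofReal (u x * w x) ∂μ :=
            (lintegral_const_mul 2 huwm).symm
        _ ≤ ∫⁻ x, (p x + q x) ∂μ := lintegral_mono this
        _ = 2 := by rw [lintegral_add_left hpm, hu1, hw1]; norm_num
    have h2' : (2:ℝ≥0∞) * R ≤ 2 * 1 := by simpa using h2
    exact (ENNReal.mul_le_mul_iff_right two_ne_zero ENNReal.ofNat_ne_top).mp h2'
  have hR_ne_top : R ≠ ⊤ := (hR_le.trans_lt ENNReal.one_lt_top).ne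
  -- D = D'
  set D : ℝ≥0∞ := ∫⁻ x, (p x - q x) ∂μ with hD
  set D' : ℝ≥0∞ := ∫⁻ x, (q x - p x) ∂μ with hD'
  set M : ℝ≥0∞ := ∫⁻ x, (p x ⊓ q x) ∂μ with hM
  have hDM : D + M = 1 := by
    rw [hD, hM, ← lintegral_add_left (f := fun x => p x - q x) (hpm.sub hqm)]
    rw [← hu1]
    exact lintegral_congr fun x => tsub_add_min
  have hD'M : D' + M = 1 := by
    rw [hD', hM, ← lintegral_add_left (f := fun x => q x - p x) (hqm.sub hpm)]
    rw [← hw1]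
    refine lintegral_congr fun x => ?_
    rw [inf_comm]
    exact tsub_add_min
  have hM_ne_top : M ≠ ⊤ := by
    intro h
    rw [h, add_top] at hDM
    exact ENNReal.one_ne_top hDM.symm
  have hDD' : D = D' := by
    have h := hDM.trans hD'M.symm
    rw [add_comm D M, add_comm D' M] at h
    exact (ENNReal.add_right_inj hM_ne_top).mp h
  have hD_le_one : D ≤ 1 := le_of_add_le_left hDM.le
  have hD_ne_top : D ≠ ⊤ := (hD_le_one.trans_lt ENNReal.one_lt_top).ne
  -- Cauchy-Schwarz
  have hsum : D + D' = ∫⁻ x, ENNReal.ofReal |u x - w x| * ENNReal.ofReal (u x + w x) ∂μ := by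
    rw [hD, hD', ← lintegral_add_left (f := fun x => p x - q x) (hpm.sub hqm)]
    refine lintegral_congr fun x => ?_
    have habs : |u x ^ 2 - w x ^ 2| = |u x - w x| * (u x + w x) := by
      rw [show u x ^ 2 - w x ^ 2 = (u x - w x) * (u x + w x) by ring, abs_mul,
        abs_of_nonneg (add_nonneg (hu0 x) (hw0 x))]
    rw [← ENNReal.ofReal_mul (abs_nonneg _), ← habs]
    rcases le_total (w x ^ 2) (u x ^ 2) with h | h
    · rw [hp, hq]
      rw [show q x - p x = 0 from tsub_eq_zero_of_le (ENNReal.ofReal_le_ofReal h), add_zero,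
        ← ENNReal.ofReal_sub _ (sq_nonneg _), abs_of_nonneg (by linarith)]
    · rw [hp, hq]
      rw [show p x - q x = 0 from tsub_eq_zero_of_le (ENNReal.ofReal_le_ofReal h), zero_add,
        ← ENNReal.ofReal_sub _ (sq_nonneg _), abs_of_nonpos (by linarith), neg_sub]
  have hconj : Real.HolderConjugate 2 2 := Real.HolderConjugate.two_two
  have hCS := ENNReal.lintegral_mul_le_Lp_mul_Lq μ hconj
    (f := fun x => ENNReal.ofReal |u x - w x|) (g := fun x => ENNReal.ofReal (u x + w x))
    ((hu.sub hw).abs.ennreal_ofReal.aemeasurable) ((hu.add hw).ennreal_ofReal.aemeasurable)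
  -- identify the two moments
  have hmm : ∀ y : ℝ, 0 ≤ y → ENNReal.ofReal y ^ (2:ℝ) = ENNReal.ofReal (y ^ 2) := by
    intro y hy
    rw [show (2:ℝ) = ((2:ℕ):ℝ) by norm_num, ENNReal.rpow_natCast, ← ENNReal.ofReal_pow hy]
  have hSm : ∫⁻ x, ENNReal.ofReal |u x - w x| ^ (2:ℝ) ∂μ = 2 - 2 * R := by
    have heq : ∫⁻ x, ENNReal.ofReal |u x - w x| ^ (2:ℝ) ∂μ
        = ∫⁻ x, ENNReal.ofReal ((u x - w x) ^ 2) ∂μ := by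
      refine lintegral_congr fun x => ?_
      rw [hmm _ (abs_nonneg _), sq_abs]
    have hadd : (∫⁻ x, ENNReal.ofReal ((u x - w x) ^ 2) ∂μ) + 2 * R = 2 := by
      rw [hR, ← lintegral_const_mul 2 huwm, ← lintegral_add_left (f := fun x => ENNReal.ofReal ((u x - w x) ^ 2)) ((hu.sub hw).pow_const 2).ennreal_ofReal]
      have : ∀ x, ENNReal.ofReal ((u x - w x) ^ 2) + 2 * ENNReal.ofReal (u x * w x)
          = p x + q x := by
        intro x
        rw [show (2 : ℝ≥0∞) = ENNReal.ofReal 2 by simp,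
          ← ENNReal.ofReal_mul (by norm_num : (0:ℝ) ≤ 2),
          ← ENNReal.ofReal_add (sq_nonneg _)
            (mul_nonneg (by norm_num) (mul_nonneg (hu0 x) (hw0 x))),
          hp, hq, ← ENNReal.ofReal_add (sq_nonneg _) (sq_nonneg _)]
        congr 1
        ring
      rw [lintegral_congr this, lintegral_add_left hpm, hu1, hw1]
      norm_num
    rw [heq]
    exact ENNReal.eq_sub_of_add_eq (ENNReal.mul_ne_top ENNReal.ofNat_ne_top hR_ne_top) hadd
  have hSp : ∫⁻ x, ENNReal.ofReal (u x + w x) ^ (2:ℝ) ∂μ = 2 + 2 * R := by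
    have heq : ∫⁻ x, ENNReal.ofReal (u x + w x) ^ (2:ℝ) ∂μ
        = ∫⁻ x, ENNReal.ofReal ((u x + w x) ^ 2) ∂μ :=
      lintegral_congr fun x => hmm _ (add_nonneg (hu0 x) (hw0 x))
    have heq2 : ∀ x, ENNReal.ofReal ((u x + w x) ^ 2)
        = p x + q x + 2 * ENNReal.ofReal (u x * w x) := by
      intro x
      rw [show (2 : ℝ≥0∞) = ENNReal.ofReal 2 by simp,
        ← ENNReal.ofReal_mul (by norm_num : (0:ℝ) ≤ 2), hp, hq,
        ← ENNReal.ofReal_add (sq_nonneg _) (sq_nonneg _),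
        ← ENNReal.ofReal_add (add_nonneg (sq_nonneg _) (sq_nonneg _))
          (mul_nonneg (by norm_num) (mul_nonneg (hu0 x) (hw0 x)))]
      congr 1
      ring
    rw [heq, lintegral_congr heq2, lintegral_add_left (f := fun a => p a + q a) (hpm.add hqm), lintegral_add_left hpm,
      hu1, hw1, lintegral_const_mul 2 huwm, ← hR]
    norm_num
  -- combine Cauchy-Schwarz with the moment computations
  have hCS' : D + D' ≤ (2 - 2 * R) ^ (1/2 : ℝ) * (2 + 2 * R) ^ (1/2 : ℝ) := by
    rw [hsum, ← hSm, ← hSp]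
    simpa [Pi.mul_apply] using hCS
  have h2D : D + D ≤ (2 - 2 * R) ^ (1/2 : ℝ) * (2 + 2 * R) ^ (1/2 : ℝ) := by
    nth_rewrite 2 [hDD']
    exact hCS'
  set ρ : ℝ := R.toReal with hρ
  have hρ0 : 0 ≤ ρ := ENNReal.toReal_nonneg
  have hρ1 : ρ ≤ 1 := by
    have := ENNReal.toReal_mono ENNReal.one_ne_top hR_le
    simpa using this
  have h2R_le : 2 * R ≤ 2 := by
    calc 2 * R ≤ 2 * 1 := by exact mul_le_mul_right hR_le 2
      _ = 2 := mul_one _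
  have hsub_toReal : ((2 : ℝ≥0∞) - 2 * R).toReal = 2 - 2 * ρ := by
    rw [ENNReal.toReal_sub_of_le h2R_le (by simp), ENNReal.toReal_mul]
    norm_num [hρ]
  have hadd_toReal : ((2 : ℝ≥0∞) + 2 * R).toReal = 2 + 2 * ρ := by
    rw [ENNReal.toReal_add (by simp) (ENNReal.mul_ne_top ENNReal.ofNat_ne_top hR_ne_top),
      ENNReal.toReal_mul]
    norm_num [hρ]
  have hX_ne_top : (2 - 2 * R) ^ (1/2 : ℝ) * (2 + 2 * R) ^ (1/2 : ℝ) ≠ ⊤ := by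
    apply ENNReal.mul_ne_top
    · exact ENNReal.rpow_ne_top_of_nonneg (by norm_num)
        (by exact ((tsub_le_self).trans_lt (by norm_num : (2:ℝ≥0∞) < ⊤)).ne)
    · exact ENNReal.rpow_ne_top_of_nonneg (by norm_num)
        (ENNReal.add_ne_top.mpr ⟨by simp, ENNReal.mul_ne_top ENNReal.ofNat_ne_top hR_ne_top⟩)
  have hD_toReal : D.toReal ≤ Real.sqrt (1 - ρ ^ 2) := by
    have h := ENNReal.toReal_mono hX_ne_top h2D
    rw [ENNReal.toReal_add hD_ne_top hD_ne_top, ENNReal.toReal_mul,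
      ← ENNReal.toReal_rpow, ← ENNReal.toReal_rpow, hsub_toReal, hadd_toReal] at h
    have hterm : (2 - 2 * ρ) ^ (1/2 : ℝ) * (2 + 2 * ρ) ^ (1/2 : ℝ)
        = 2 * Real.sqrt (1 - ρ ^ 2) := by
      rw [← Real.sqrt_eq_rpow, ← Real.sqrt_eq_rpow, ← Real.sqrt_mul (by linarith),
        show (2 - 2 * ρ) * (2 + 2 * ρ) = 4 * (1 - ρ ^ 2) by ring,
        Real.sqrt_mul (by norm_num), show Real.sqrt 4 = 2 by
          rw [show (4:ℝ) = 2 ^ 2 by norm_num, Real.sqrt_sq (by norm_num)]]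
    rw [hterm] at h
    linarith
  -- measure comparison
  have hstep : ∀ (f g : α → ℝ≥0∞), Measurable f → Measurable g →
      (μ.withDensity f) A ≤ (μ.withDensity g) A + ∫⁻ x, (f x - g x) ∂μ := by
    intro f g hfm hgm
    rw [withDensity_apply _ hA, withDensity_apply _ hA]
    calc ∫⁻ x in A, f x ∂μ ≤ ∫⁻ x in A, (g x + (f x - g x)) ∂μ :=
          lintegral_mono fun x => le_add_tsub
      _ = ∫⁻ x in A, g x ∂μ + ∫⁻ x in A, (f x - g x) ∂μ := lintegral_add_left hgm _
      _ ≤ ∫⁻ x in A, g x ∂μ + ∫⁻ x, (f x - g x) ∂μ :=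
          add_le_add_right (setLIntegral_le_lintegral _ _) _
  have hPA : (μ.withDensity p) A ≤ 1 := by
    rw [withDensity_apply _ hA]
    exact le_of_le_of_eq (setLIntegral_le_lintegral _ _) hu1
  have hQA : (μ.withDensity q) A ≤ 1 := by
    rw [withDensity_apply _ hA]
    exact le_of_le_of_eq (setLIntegral_le_lintegral _ _) hw1
  have hPA_ne : (μ.withDensity p) A ≠ ⊤ := (hPA.trans_lt ENNReal.one_lt_top).ne
  have hQA_ne : (μ.withDensity q) A ≠ ⊤ := (hQA.trans_lt ENNReal.one_lt_top).ne
  have h1 : (μ.withDensity p) A ≤ (μ.withDensity q) A + D := hstep p q hpm hqm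
  have h2 : (μ.withDensity q) A ≤ (μ.withDensity p) A + D := by
    have := hstep q p hqm hpm
    rwa [← hD', ← hDD'] at this
  have h1r : ((μ.withDensity p) A).toReal ≤ ((μ.withDensity q) A).toReal + D.toReal := by
    have := ENNReal.toReal_mono (ENNReal.add_ne_top.mpr ⟨hQA_ne, hD_ne_top⟩) h1
    rwa [ENNReal.toReal_add hQA_ne hD_ne_top] at this
  have h2r : ((μ.withDensity q) A).toReal ≤ ((μ.withDensity p) A).toReal + D.toReal := by
    have := ENNReal.toReal_mono (ENNReal.add_ne_top.mpr ⟨hPA_ne, hD_ne_top⟩) h2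
    rwa [ENNReal.toReal_add hPA_ne hD_ne_top] at this
  have habs : |((μ.withDensity p) A).toReal - ((μ.withDensity q) A).toReal| ≤ D.toReal :=
    abs_sub_le_iff.mpr ⟨by linarith, by linarith⟩
  exact habs.trans hD_toReal


lemma gaussian_affinity (m m' σ σ' : ℝ) (hσ : 0 < σ) (hσ' : 0 < σ') :
    ∫⁻ y, ENNReal.ofReal (Real.sqrt (gaussianPDFReal m (Real.toNNReal σ ^ 2) y)
        * Real.sqrt (gaussianPDFReal m' (Real.toNNReal σ' ^ 2) y)) ∂(volume : Measure ℝ)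
      = ENNReal.ofReal (Real.sqrt (2 * σ * σ' / (σ ^ 2 + σ' ^ 2))
          * Real.exp (-((m - m') ^ 2 / (4 * (σ ^ 2 + σ' ^ 2))))) := by
  have hπ := Real.pi_pos
  have hv : ((Real.toNNReal σ ^ 2 : ℝ≥0) : ℝ) = σ ^ 2 := by
    rw [NNReal.coe_pow, Real.coe_toNNReal _ hσ.le]
  have hv' : ((Real.toNNReal σ' ^ 2 : ℝ≥0) : ℝ) = σ' ^ 2 := by
    rw [NNReal.coe_pow, Real.coe_toNNReal _ hσ'.le]
  set S : ℝ := σ ^ 2 + σ' ^ 2 with hS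
  have hS0 : 0 < S := by positivity
  set a : ℝ := S / (4 * σ ^ 2 * σ' ^ 2) with ha_def
  have ha : 0 < a := by positivity
  set t : ℝ := (m * σ' ^ 2 + m' * σ ^ 2) / S with ht_def
  set C : ℝ := (m - m') ^ 2 / (4 * S) with hC_def
  set c : ℝ := (Real.sqrt (2 * π * (σ * σ')))⁻¹ * Real.exp (-C) with hc_def
  have hexp_half : ∀ z : ℝ, Real.sqrt (Real.exp z) = Real.exp (z / 2) := by
    intro z
    rw [show Real.exp z = Real.exp (z / 2) * Real.exp (z / 2) by
        rw [← Real.exp_add]; ring_nf,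
      Real.sqrt_mul_self (Real.exp_nonneg _)]
  have hsqrt_prod : Real.sqrt (2 * π * σ ^ 2) * Real.sqrt (2 * π * σ' ^ 2)
      = 2 * π * (σ * σ') := by
    rw [← Real.sqrt_mul (by positivity),
      show 2 * π * σ ^ 2 * (2 * π * σ' ^ 2) = (2 * π * (σ * σ')) ^ 2 by ring]
    exact Real.sqrt_sq (by positivity)
  have hquad : ∀ y : ℝ,
      (-(y - m) ^ 2 / (2 * σ ^ 2) + -(y - m') ^ 2 / (2 * σ' ^ 2)) / 2
        = -(a * (y - t) ^ 2) + -C := by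
    intro y
    rw [ha_def, ht_def, hC_def, hS]
    field_simp
    ring
  have hpoint : ∀ y : ℝ,
      Real.sqrt (gaussianPDFReal m (Real.toNNReal σ ^ 2) y)
        * Real.sqrt (gaussianPDFReal m' (Real.toNNReal σ' ^ 2) y)
      = c * Real.exp (-(a * (y - t) ^ 2)) := by
    intro y
    rw [← Real.sqrt_mul (gaussianPDFReal_nonneg _ _ _), gaussianPDFReal, gaussianPDFReal, hv, hv',
      show (Real.sqrt (2 * π * σ ^ 2))⁻¹ * Real.exp (-(y - m) ^ 2 / (2 * σ ^ 2))
          * ((Real.sqrt (2 * π * σ' ^ 2))⁻¹ * Real.exp (-(y - m') ^ 2 / (2 * σ' ^ 2)))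
        = (Real.sqrt (2 * π * σ ^ 2) * Real.sqrt (2 * π * σ' ^ 2))⁻¹
          * Real.exp (-(y - m) ^ 2 / (2 * σ ^ 2) + -(y - m') ^ 2 / (2 * σ' ^ 2)) by
        rw [Real.exp_add, mul_inv]; ring,
      hsqrt_prod, Real.sqrt_mul (by positivity), Real.sqrt_inv, hexp_half, hquad y,
      Real.exp_add, hc_def]
    ring
  have hint : Integrable (fun y : ℝ => c * Real.exp (-(a * (y - t) ^ 2))) := by
    have h1 : Integrable (fun x : ℝ => Real.exp (-a * x ^ 2)) := integrable_exp_neg_mul_sq ha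
    have h2 := h1.comp_sub_right t
    refine (h2.const_mul c).congr ?_
    refine Filter.EventuallyEq.of_eq (funext fun y => ?_)
    rw [neg_mul]
  have hintegral : ∫ y : ℝ, c * Real.exp (-(a * (y - t) ^ 2)) = c * Real.sqrt (π / a) := by
    rw [MeasureTheory.integral_const_mul]
    congr 1
    have := integral_sub_right_eq_self (μ := volume) (fun x : ℝ => Real.exp (-(a * x ^ 2))) t
    rw [this]
    simp_rw [neg_mul_eq_neg_mul]
    exact integral_gaussian a
  have hconst : c * Real.sqrt (π / a)
      = Real.sqrt (2 * σ * σ' / S) * Real.exp (-C) := by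
    rw [hc_def]
    have : (Real.sqrt (2 * π * (σ * σ')))⁻¹ * Real.sqrt (π / a)
        = Real.sqrt (2 * σ * σ' / S) := by
      rw [← Real.sqrt_inv, ← Real.sqrt_mul (by positivity)]
      congr 1
      rw [ha_def]
      field_simp
      ring
    rw [show (Real.sqrt (2 * π * (σ * σ')))⁻¹ * Real.exp (-C) * Real.sqrt (π / a)
        = (Real.sqrt (2 * π * (σ * σ')))⁻¹ * Real.sqrt (π / a) * Real.exp (-C) by ring, this]
  calc ∫⁻ y, ENNReal.ofReal (Real.sqrt (gaussianPDFReal m (Real.toNNReal σ ^ 2) y)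
        * Real.sqrt (gaussianPDFReal m' (Real.toNNReal σ' ^ 2) y)) ∂volume
      = ∫⁻ y, ENNReal.ofReal (c * Real.exp (-(a * (y - t) ^ 2))) ∂volume := by
        exact lintegral_congr fun y => by rw [hpoint y]
    _ = ENNReal.ofReal (∫ y : ℝ, c * Real.exp (-(a * (y - t) ^ 2))) := by
        rw [MeasureTheory.ofReal_integral_eq_lintegral_ofReal hint]
        refine Filter.Eventually.of_forall fun y => ?_
        have hc0 : 0 ≤ c := by
          rw [hc_def]
          positivity
        positivity
    _ = ENNReal.ofReal (Real.sqrt (2 * σ * σ' / S) * Real.exp (-C)) := by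
        rw [hintegral, hconst]
    _ = _ := by rw [hS, hC_def]


lemma one_sub_pow_le_nat (t : ℝ) (ht0 : 0 ≤ t) (ht1 : t ≤ 1) (k : ℕ) :
    1 - t ^ k ≤ k * (1 - t) := by
  induction k with
  | zero => simp
  | succ k ih =>
    have htk : 0 ≤ t ^ k := pow_nonneg ht0 k
    have htk1 : t ^ k ≤ 1 := pow_le_one₀ ht0 ht1
    have : 1 - t ^ (k + 1) = (1 - t) + t * (1 - t ^ k) := by ring
    rw [this]
    have h2 : t * (1 - t ^ k) ≤ 1 - t ^ k := by nlinarith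
    push_cast
    nlinarith

lemma rho_lower (m m' σ σ' δ : ℝ) (hσδ : 0 < σ - δ) (hσ'l : σ - δ < σ') (hσl : σ - δ < σ) :
    1 - Real.sqrt (2 * σ * σ' / (σ ^ 2 + σ' ^ 2))
        * Real.exp (-((m - m') ^ 2 / (4 * (σ ^ 2 + σ' ^ 2))))
      ≤ ((m - m') ^ 2 + (σ - σ') ^ 2) / (2 * (σ - δ) ^ 2) := by
  have hσ0 : 0 < σ := hσδ.trans hσl
  have hσ'0 : 0 < σ' := hσδ.trans hσ'l
  set S : ℝ := σ ^ 2 + σ' ^ 2 with hS_def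
  have hS0 : 0 < S := by positivity
  set x : ℝ := Real.sqrt (2 * σ * σ' / S) with hx_def
  set C : ℝ := (m - m') ^ 2 / (4 * S) with hC_def
  have hx0 : 0 ≤ x := Real.sqrt_nonneg _
  have hxsq : x ^ 2 = 2 * σ * σ' / S := Real.sq_sqrt (by positivity)
  have hx1 : x ≤ 1 := by
    rw [hx_def]
    refine Real.sqrt_le_one.mpr ?_
    rw [div_le_one hS0]
    nlinarith [sq_nonneg (σ - σ')]
  have hC0 : 0 ≤ C := by positivity
  have hexp : 1 - C ≤ Real.exp (-C) := by
    have := Real.add_one_le_exp (-C)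
    linarith
  have hkey : 1 - x * Real.exp (-C) ≤ (1 - x ^ 2) + C := by
    have h1 : x * (1 - C) ≤ x * Real.exp (-C) := mul_le_mul_of_nonneg_left hexp hx0
    nlinarith
  have h1x : 1 - x ^ 2 = (σ - σ') ^ 2 / S := by
    rw [hxsq]
    field_simp
    ring
  have hS2 : 2 * (σ - δ) ^ 2 ≤ S := by nlinarith
  have e1 : (σ - σ') ^ 2 / S ≤ (σ - σ') ^ 2 / (2 * (σ - δ) ^ 2) :=
    div_le_div_of_nonneg_left (sq_nonneg _) (by positivity) hS2
  have e2 : C ≤ (m - m') ^ 2 / (2 * (σ - δ) ^ 2) := by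
    rw [hC_def]
    exact div_le_div_of_nonneg_left (sq_nonneg _) (by positivity) (by nlinarith)
  calc 1 - x * Real.exp (-C) ≤ (1 - x ^ 2) + C := hkey
    _ ≤ (σ - σ') ^ 2 / (2 * (σ - δ) ^ 2) + (m - m') ^ 2 / (2 * (σ - δ) ^ 2) := by
        rw [h1x]; exact add_le_add e1 e2
    _ = ((m - m') ^ 2 + (σ - σ') ^ 2) / (2 * (σ - δ) ^ 2) := by
        rw [← add_div, add_comm]

lemma rho_mem (m m' σ σ' : ℝ) (hσ0 : 0 < σ) (hσ'0 : 0 < σ') :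
    0 ≤ Real.sqrt (2 * σ * σ' / (σ ^ 2 + σ' ^ 2))
        * Real.exp (-((m - m') ^ 2 / (4 * (σ ^ 2 + σ' ^ 2)))) ∧
    Real.sqrt (2 * σ * σ' / (σ ^ 2 + σ' ^ 2))
        * Real.exp (-((m - m') ^ 2 / (4 * (σ ^ 2 + σ' ^ 2)))) ≤ 1 := by
  have hS0 : (0:ℝ) < σ ^ 2 + σ' ^ 2 := by positivity
  constructor
  · positivity
  · refine mul_le_one₀ ?_ (Real.exp_nonneg _) ?_
    · refine Real.sqrt_le_one.mpr ?_
      rw [div_le_one hS0]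
      nlinarith [sq_nonneg (σ - σ')]
    · refine Real.exp_le_one_iff.mpr (neg_nonpos.mpr ?_)
      positivity

end AuxTV

/-- **Smoothness of the Gaussian i.i.d. family in variational distance.** Let `θ = (m,σ)` with
`σ > 0` and fix `δ ∈ (0,σ)`. For every `θ' = (m',σ')` with `σ' > 0` and `‖θ - θ'‖ < δ`
(Euclidean norm on `ℝ²`) and every `n ≥ 1`,
`d(N(m,σ²)^⊗n, N(m',σ'²)^⊗n) ≤ √n · (3/(σ-δ)) · ‖θ - θ'‖`. -/
theorem stmt_7 (m σ : ℝ) (hσ : 0 < σ) (δ : ℝ) (hδ : 0 < δ) (hδσ : δ < σ)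
    (m' σ' : ℝ) (hσ' : 0 < σ')
    (hclose : Real.sqrt ((m - m') ^ 2 + (σ - σ') ^ 2) < δ)
    (n : ℕ) (hn : 1 ≤ n) :
    tvDist (Measure.pi fun _ : Fin n => gaussianReal m (Real.toNNReal σ ^ 2))
        (Measure.pi fun _ : Fin n => gaussianReal m' (Real.toNNReal σ' ^ 2)) ≤
      Real.sqrt n * (3 / (σ - δ)) * Real.sqrt ((m - m') ^ 2 + (σ - σ') ^ 2) := by
  have h0σδ : 0 < σ - δ := sub_pos.mpr hδσ
  set Δ : ℝ := Real.sqrt ((m - m') ^ 2 + (σ - σ') ^ 2) with hΔ_def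
  have hΔ0 : 0 ≤ Δ := Real.sqrt_nonneg _
  have hΔsq : Δ ^ 2 = (m - m') ^ 2 + (σ - σ') ^ 2 := Real.sq_sqrt (by positivity)
  have hσ'gt : σ - δ < σ' := by
    have habs : |σ - σ'| ≤ Δ := by
      rw [show |σ - σ'| = Real.sqrt ((σ - σ') ^ 2) from (Real.sqrt_sq_eq_abs _).symm, hΔ_def]
      exact Real.sqrt_le_sqrt (by nlinarith [sq_nonneg (m - m')])
    have h2 := abs_lt.mp (habs.trans_lt hclose)
    linarith [h2.1, h2.2]
  set v : ℝ≥0 := Real.toNNReal σ ^ 2 with hv_def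
  set v' : ℝ≥0 := Real.toNNReal σ' ^ 2 with hv'_def
  have hvne : v ≠ 0 := pow_ne_zero 2 (Real.toNNReal_pos.mpr hσ).ne'
  have hv'ne : v' ≠ 0 := pow_ne_zero 2 (Real.toNNReal_pos.mpr hσ').ne'
  set u : ℝ → ℝ := fun y => Real.sqrt (gaussianPDFReal m v y) with hu_def
  set w : ℝ → ℝ := fun y => Real.sqrt (gaussianPDFReal m' v' y) with hw_def
  have hu_meas : Measurable u := Real.continuous_sqrt.measurable.comp
    (measurable_gaussianPDFReal m v)
  have hw_meas : Measurable w := Real.continuous_sqrt.measurable.comp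
    (measurable_gaussianPDFReal m' v')
  have hu0 : ∀ y, 0 ≤ u y := fun y => Real.sqrt_nonneg _
  have hw0 : ∀ y, 0 ≤ w y := fun y => Real.sqrt_nonneg _
  have hu_sq : ∀ y, u y ^ 2 = gaussianPDFReal m v y :=
    fun y => Real.sq_sqrt (gaussianPDFReal_nonneg _ _ _)
  have hw_sq : ∀ y, w y ^ 2 = gaussianPDFReal m' v' y :=
    fun y => Real.sq_sqrt (gaussianPDFReal_nonneg _ _ _)
  -- the product functions
  set U : (Fin n → ℝ) → ℝ := fun x => ∏ i, u (x i) with hU_def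
  set W : (Fin n → ℝ) → ℝ := fun x => ∏ i, w (x i) with hW_def
  have hU_meas : Measurable U :=
    Finset.measurable_prod _ fun i _ => hu_meas.comp (measurable_pi_apply i)
  have hW_meas : Measurable W :=
    Finset.measurable_prod _ fun i _ => hw_meas.comp (measurable_pi_apply i)
  have hU0 : ∀ x, 0 ≤ U x := fun x => Finset.prod_nonneg fun i _ => hu0 _
  have hW0 : ∀ x, 0 ≤ W x := fun x => Finset.prod_nonneg fun i _ => hw0 _
  have hUsq : ∀ x, ENNReal.ofReal (U x ^ 2) = ∏ i, gaussianPDF m v (x i) := by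
    intro x
    rw [hU_def, ← Finset.prod_pow, ENNReal.ofReal_prod_of_nonneg fun i _ => sq_nonneg _]
    exact Finset.prod_congr rfl fun i _ => by rw [hu_sq]; rfl
  have hWsq : ∀ x, ENNReal.ofReal (W x ^ 2) = ∏ i, gaussianPDF m' v' (x i) := by
    intro x
    rw [hW_def, ← Finset.prod_pow, ENNReal.ofReal_prod_of_nonneg fun i _ => sq_nonneg _]
    exact Finset.prod_congr rfl fun i _ => by rw [hw_sq]; rfl
  -- moments are 1
  have hU1 : ∫⁻ x, ENNReal.ofReal (U x ^ 2) ∂(Measure.pi fun _ : Fin n => (volume : Measure ℝ))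
      = 1 := by
    rw [lintegral_congr hUsq, lintegral_pi_prod volume _ fun i => measurable_gaussianPDF m v]
    simp [lintegral_gaussianPDF_eq_one m hvne]
  have hW1 : ∫⁻ x, ENNReal.ofReal (W x ^ 2) ∂(Measure.pi fun _ : Fin n => (volume : Measure ℝ))
      = 1 := by
    rw [lintegral_congr hWsq, lintegral_pi_prod volume _ fun i => measurable_gaussianPDF m' v']
    simp [lintegral_gaussianPDF_eq_one m' hv'ne]
  -- product measures as withDensity
  haveI : SigmaFinite (volume.withDensity (gaussianPDF m v)) := by
    rw [← gaussianReal_of_var_ne_zero m hvne]; infer_instance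
  haveI : SigmaFinite (volume.withDensity (gaussianPDF m' v')) := by
    rw [← gaussianReal_of_var_ne_zero m' hv'ne]; infer_instance
  have hPn : (Measure.pi fun _ : Fin n => gaussianReal m v)
      = (Measure.pi fun _ : Fin n => (volume : Measure ℝ)).withDensity
          fun x => ENNReal.ofReal (U x ^ 2) := by
    have h1 : (fun _ : Fin n => gaussianReal m v)
        = fun _ : Fin n => volume.withDensity (gaussianPDF m v) := by
      funext i; exact gaussianReal_of_var_ne_zero m hvne
    rw [h1, pi_withDensity volume _ (measurable_gaussianPDF m v)]
    congr 1
    funext x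
    rw [hUsq]
  have hQn : (Measure.pi fun _ : Fin n => gaussianReal m' v')
      = (Measure.pi fun _ : Fin n => (volume : Measure ℝ)).withDensity
          fun x => ENNReal.ofReal (W x ^ 2) := by
    have h1 : (fun _ : Fin n => gaussianReal m' v')
        = fun _ : Fin n => volume.withDensity (gaussianPDF m' v') := by
      funext i; exact gaussianReal_of_var_ne_zero m' hv'ne
    rw [h1, pi_withDensity volume _ (measurable_gaussianPDF m' v')]
    congr 1
    funext x
    rw [hWsq]
  -- the affinity
  set ρ : ℝ := Real.sqrt (2 * σ * σ' / (σ ^ 2 + σ' ^ 2))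
      * Real.exp (-((m - m') ^ 2 / (4 * (σ ^ 2 + σ' ^ 2)))) with hρ_def
  obtain ⟨hρ0, hρ1⟩ := rho_mem m m' σ σ' hσ hσ'
  have hRval : ∫⁻ x, ENNReal.ofReal (U x * W x)
      ∂(Measure.pi fun _ : Fin n => (volume : Measure ℝ)) = ENNReal.ofReal ρ ^ n := by
    have h1 : ∀ x : Fin n → ℝ, ENNReal.ofReal (U x * W x)
        = ∏ i, ENNReal.ofReal (u (x i) * w (x i)) := by
      intro x
      rw [hU_def, hW_def, ← Finset.prod_mul_distrib,
        ENNReal.ofReal_prod_of_nonneg fun i _ => mul_nonneg (hu0 _) (hw0 _)]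
    rw [lintegral_congr h1, lintegral_pi_prod volume (fun _ y => ENNReal.ofReal (u y * w y))
      fun i => ((hu_meas.mul hw_meas)).ennreal_ofReal]
    rw [Finset.prod_congr rfl fun (i : Fin n) _ => gaussian_affinity m m' σ σ' hσ hσ']
    rw [Finset.prod_const, Finset.card_univ, Fintype.card_fin]
  -- bound each term of the sup
  have hbound : ∀ A : {A : Set (Fin n → ℝ) // MeasurableSet A},
      |((Measure.pi fun _ : Fin n => gaussianReal m v) A.1).toReal
        - ((Measure.pi fun _ : Fin n => gaussianReal m' v') A.1).toReal|
      ≤ Real.sqrt (1 - (ρ ^ n) ^ 2) := by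
    intro A
    have h := tv_hellinger_bound (Measure.pi fun _ : Fin n => (volume : Measure ℝ))
      U W hU_meas hW_meas hU0 hW0 hU1 hW1 A.2
    rw [hRval] at h
    rw [ENNReal.toReal_pow, ENNReal.toReal_ofReal hρ0] at h
    rw [hPn, hQn]
    exact h
  haveI : Nonempty {A : Set (Fin n → ℝ) // MeasurableSet A} :=
    ⟨⟨∅, MeasurableSet.empty⟩⟩
  have hsup : tvDist (Measure.pi fun _ : Fin n => gaussianReal m v)
      (Measure.pi fun _ : Fin n => gaussianReal m' v')
      ≤ 2 * Real.sqrt (1 - (ρ ^ n) ^ 2) := by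
    unfold tvDist
    have := ciSup_le hbound
    linarith
  refine hsup.trans ?_
  -- final elementary estimate
  have hpow : 1 - (ρ ^ n) ^ 2 ≤ (n * 2 : ℕ) * (1 - ρ) := by
    have := one_sub_pow_le_nat ρ hρ0 hρ1 (n * 2)
    rw [pow_mul] at this
    exact this
  have hrholow : 1 - ρ ≤ ((m - m') ^ 2 + (σ - σ') ^ 2) / (2 * (σ - δ) ^ 2) :=
    rho_lower m m' σ σ' δ h0σδ hσ'gt (by linarith)
  have hfinal : 1 - (ρ ^ n) ^ 2 ≤ n * (Δ / (σ - δ)) ^ 2 := by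
    have h2 : ((n * 2 : ℕ) : ℝ) * (1 - ρ)
        ≤ (n * 2 : ℝ) * (((m - m') ^ 2 + (σ - σ') ^ 2) / (2 * (σ - δ) ^ 2)) := by
      push_cast
      have hn0 : (0:ℝ) ≤ (n : ℝ) * 2 := by positivity
      refine mul_le_mul_of_nonneg_left hrholow hn0
    have h3 : (n * 2 : ℝ) * (((m - m') ^ 2 + (σ - σ') ^ 2) / (2 * (σ - δ) ^ 2))
        = n * (Δ / (σ - δ)) ^ 2 := by
      rw [div_pow, hΔsq]
      field_simp
    calc 1 - (ρ ^ n) ^ 2 ≤ ((n * 2 : ℕ) : ℝ) * (1 - ρ) := hpow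
      _ ≤ (n * 2 : ℝ) * (((m - m') ^ 2 + (σ - σ') ^ 2) / (2 * (σ - δ) ^ 2)) := by
          push_cast at h2 ⊢; exact h2
      _ = n * (Δ / (σ - δ)) ^ 2 := h3
  have hsqrt : Real.sqrt (1 - (ρ ^ n) ^ 2) ≤ Real.sqrt n * (Δ / (σ - δ)) := by
    have h1 : Real.sqrt (1 - (ρ ^ n) ^ 2) ≤ Real.sqrt (n * (Δ / (σ - δ)) ^ 2) :=
      Real.sqrt_le_sqrt hfinal
    refine h1.trans_eq ?_
    rw [Real.sqrt_mul (Nat.cast_nonneg n), Real.sqrt_sq (by positivity)]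
  have hΔdiv : 0 ≤ Real.sqrt n * (Δ / (σ - δ)) := by positivity
  calc 2 * Real.sqrt (1 - (ρ ^ n) ^ 2) ≤ 2 * (Real.sqrt n * (Δ / (σ - δ))) := by linarith
    _ ≤ Real.sqrt n * (3 / (σ - δ)) * Δ := by
        rw [show Real.sqrt n * (3 / (σ - δ)) * Δ = 3 * (Real.sqrt n * (Δ / (σ - δ))) by
          field_simp]
        linarith
end

section
/- Let { P_θ : θ ∈ Λ } be a family of probability measures on a measurable space Z, all absolutely continuous with respect to a σ-finite measure ν, with densities p_θ = dP_θ/dν, and let 𝒜 be the Yatracos class 𝒜 = { { z ∈ Z : p_θ(z) > p_{θ'}(z) } : θ, θ' ∈ Λ, θ ≠ θ' }. Let μ be any probability measure on Z, and for θ ∈ Λ define U_θ = sup_{A ∈ 𝒜} |P_θ(A) − μ(A)|. Let θ₀ ∈ Λ, let ε > 0, and suppose θ* ∈ Λ satisfies U_{θ*} ≤ inf_{θ ∈ Λ} U_θ + ε. Then ∫_Z |p_{θ₀}(z) − p_{θ*}(z)| dν(z) ≤ 4 U_{θ₀} + 3 ε. -/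
open MeasureTheory

/-- **Deterministic property of the Devroye–Lugosi minimum-distance estimator.** Let
`{P_θ : θ ∈ Λ}` have densities `p_θ` w.r.t. a σ-finite measure `ν`, let `𝒜` be the Yatracos
class, let `μ` be any probability measure, and let `U_θ = sup_{A ∈ 𝒜} |P_θ(A) - μ(A)|`. If
`θ*` satisfies `U_{θ*} ≤ inf_θ U_θ + ε`, then `∫ |p_{θ₀} - p_{θ*}| dν ≤ 4 U_{θ₀} + 3ε`. -/
theorem stmt_15 {Z ι : Type*} [MeasurableSpace Z]
    (ν : Measure Z) [SigmaFinite ν]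
    (P : ι → Measure Z) (hprob : ∀ θ, IsProbabilityMeasure (P θ))
    (p : ι → Z → ℝ)
    (hpmeas : ∀ θ, Measurable (p θ)) (hpnn : ∀ θ z, 0 ≤ p θ z)
    (hdens : ∀ θ, P θ = ν.withDensity (fun z => ENNReal.ofReal (p θ z)))
    (𝒜 : Set (Set Z))
    (h𝒜 : 𝒜 = {A | ∃ θ θ' : ι, θ ≠ θ' ∧ A = {z | p θ' z < p θ z}})
    (μ : Measure Z) [IsProbabilityMeasure μ]
    (U : ι → ℝ)
    (hU : ∀ θ, U θ = ⨆ A : 𝒜, |(P θ (A : Set Z)).toReal - (μ (A : Set Z)).toReal|)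
    (θ₀ : ι) (ε : ℝ) (hε : 0 < ε)
    (θstar : ι) (hmin : U θstar ≤ (⨅ θ, U θ) + ε) :
    ∫ z, |p θ₀ z - p θstar z| ∂ν ≤ 4 * U θ₀ + 3 * ε := by
  haveI : Nonempty ι := ⟨θ₀⟩
  -- lintegral of each density is 1
  have hlin : ∀ θ, ∫⁻ z, ENNReal.ofReal (p θ z) ∂ν = 1 := by
    intro θ
    have h := (hprob θ).measure_univ
    rw [hdens θ, withDensity_apply _ MeasurableSet.univ] at h
    simpa using h
  -- integrability of the densities
  have hint : ∀ θ, Integrable (p θ) ν := by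
    intro θ
    refine ⟨(hpmeas θ).aestronglyMeasurable, ?_⟩
    rw [hasFiniteIntegral_iff_ofReal (ae_of_all _ (hpnn θ)), hlin θ]
    exact ENNReal.one_lt_top
  -- set integrals of densities equal measures
  have hset : ∀ θ (s : Set Z), MeasurableSet s → ∫ z in s, p θ z ∂ν = (P θ s).toReal := by
    intro θ s hs
    have h1 : P θ s = ∫⁻ z in s, ENNReal.ofReal (p θ z) ∂ν := by
      rw [hdens θ, withDensity_apply _ hs]
    have h2 : ENNReal.ofReal (∫ z in s, p θ z ∂ν) = ∫⁻ z in s, ENNReal.ofReal (p θ z) ∂ν :=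
      ofReal_integral_eq_lintegral_ofReal ((hint θ).restrict) (ae_of_all _ (hpnn θ))
    rw [h1, ← h2, ENNReal.toReal_ofReal (integral_nonneg (hpnn θ))]
  have htot : ∀ θ, ∫ z, p θ z ∂ν = 1 := by
    intro θ
    have h := hset θ Set.univ MeasurableSet.univ
    simpa [(hprob θ).measure_univ] using h
  -- U is nonnegative
  have hUnn : ∀ θ, 0 ≤ U θ := by
    intro θ
    rw [hU θ]
    exact Real.iSup_nonneg fun A => abs_nonneg _
  -- measures in [0,1]
  have hP01 : ∀ θ (B : Set Z), (P θ B).toReal ≤ 1 := by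
    intro θ B
    have h : P θ B ≤ 1 := prob_le_one
    have := ENNReal.toReal_mono ENNReal.one_ne_top h
    simpa using this
  have hμ01 : ∀ (B : Set Z), (μ B).toReal ≤ 1 := by
    intro B
    have h : μ B ≤ 1 := prob_le_one
    have := ENNReal.toReal_mono ENNReal.one_ne_top h
    simpa using this
  -- U is an upper bound on members of the Yatracos class
  have hUle : ∀ θ (A : Set Z), A ∈ 𝒜 → |(P θ A).toReal - (μ A).toReal| ≤ U θ := by
    intro θ A hA
    rw [hU θ]
    refine le_ciSup (f := fun B : 𝒜 => |(P θ (B : Set Z)).toReal - (μ (B : Set Z)).toReal|) ⟨2, ?_⟩ (⟨A, hA⟩ : 𝒜)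
    rintro x ⟨B, rfl⟩
    have h1 := hP01 θ (B : Set Z)
    have h2 := hμ01 (B : Set Z)
    have h3 : (0:ℝ) ≤ (P θ (B : Set Z)).toReal := ENNReal.toReal_nonneg
    have h4 : (0:ℝ) ≤ (μ (B : Set Z)).toReal := ENNReal.toReal_nonneg
    rw [abs_le]
    constructor <;> linarith
  by_cases hne : θ₀ = θstar
  · subst hne
    have h0 : ∫ z, |p θ₀ z - p θ₀ z| ∂ν = 0 := by simp
    rw [h0]
    have := hUnn θ₀
    linarith
  · set A : Set Z := {z | p θstar z < p θ₀ z} with hAdef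
    have hAm : MeasurableSet A := measurableSet_lt (hpmeas θstar) (hpmeas θ₀)
    have hA𝒜 : A ∈ 𝒜 := by rw [h𝒜]; exact ⟨θ₀, θstar, hne, rfl⟩
    set a := (P θ₀ A).toReal
    set b := (P θstar A).toReal
    set m := (μ A).toReal
    -- integral over A
    have hIA : ∫ z in A, |p θ₀ z - p θstar z| ∂ν = a - b := by
      have hcongr : ∀ z ∈ A, |p θ₀ z - p θstar z| = p θ₀ z - p θstar z := by
        intro z hz
        exact abs_of_pos (sub_pos.mpr hz)
      rw [setIntegral_congr_fun hAm hcongr,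
        integral_sub ((hint θ₀).restrict) ((hint θstar).restrict),
        hset θ₀ A hAm, hset θstar A hAm]
    -- integral over Aᶜ
    have hIAc : ∫ z in Aᶜ, |p θ₀ z - p θstar z| ∂ν
        = (∫ z in Aᶜ, p θstar z ∂ν) - ∫ z in Aᶜ, p θ₀ z ∂ν := by
      have hcongr : ∀ z ∈ Aᶜ, |p θ₀ z - p θstar z| = p θstar z - p θ₀ z := by
        intro z hz
        have : p θ₀ z ≤ p θstar z := not_lt.mp hz
        rw [abs_sub_comm]
        exact abs_of_nonneg (sub_nonneg.mpr this)
      rw [setIntegral_congr_fun hAm.compl hcongr,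
        integral_sub ((hint θstar).restrict) ((hint θ₀).restrict)]
    have hsplit0 : (∫ z in A, p θ₀ z ∂ν) + ∫ z in Aᶜ, p θ₀ z ∂ν = 1 := by
      rw [integral_add_compl hAm (hint θ₀), htot θ₀]
    have hsplit1 : (∫ z in A, p θstar z ∂ν) + ∫ z in Aᶜ, p θstar z ∂ν = 1 := by
      rw [integral_add_compl hAm (hint θstar), htot θstar]
    have hc0 : ∫ z in Aᶜ, p θ₀ z ∂ν = 1 - a := by
      have := hset θ₀ A hAm; linarith
    have hc1 : ∫ z in Aᶜ, p θstar z ∂ν = 1 - b := by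
      have := hset θstar A hAm; linarith
    have htotal : ∫ z, |p θ₀ z - p θstar z| ∂ν = 2 * a - 2 * b := by
      have h := integral_add_compl hAm ((hint θ₀).sub (hint θstar)).abs
      simp only [Pi.sub_apply] at h
      rw [← h, hIA, hIAc, hc0, hc1]
      ring
    have h₀ : |a - m| ≤ U θ₀ := hUle θ₀ A hA𝒜
    have h₁ : |b - m| ≤ U θstar := hUle θstar A hA𝒜
    have hinf : (⨅ θ, U θ) ≤ U θ₀ := ciInf_le ⟨0, by rintro x ⟨θ, rfl⟩; exact hUnn θ⟩ θ₀
    have ha := abs_le.mp h₀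
    have hb := abs_le.mp h₁
    rw [htotal]
    linarith
end
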